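/- arXiv:1310.5880 — 7 statements merged into one kernel-verified Lean document; each statement's English description precedes it below -/
import Mathlib

section
/- Let A₀, A₁, …, A_k ∈ ℝ^{n×n} be pairwise commuting normal matrices (i.e., AᵢᵀAᵢ = AᵢAᵢᵀ for each i and AᵢAⱼ = AⱼAᵢ for all i, j). Then the supremum over all unit vectors v ∈ ℝⁿ of the infimum over all real coefficients α₁, …, α_k ∈ ℝ of ‖A₀v − Σ_{i=1}^k αᵢAᵢv‖ equals the infimum over all α₁, …, α_k ∈ ℝ of ‖A₀ − Σ_{i=1}^k αᵢAᵢ‖, where the vector norm is the Euclidean norm on ℝⁿ and the matrix norm is the operator norm induced by the Euclidean norm (spectral norm). -/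
set_option maxHeartbeats 1000000
set_option synthInstance.maxHeartbeats 100000

open Matrix RealInnerProductSpace


lemma eq_zero_of_trace_transpose_mul_self {n : ℕ} (X : Matrix (Fin n) (Fin n) ℝ)
    (h : Matrix.trace (Xᵀ * X) = 0) : X = 0 := by
  have hexp : Matrix.trace (Xᵀ * X) = ∑ i : Fin n, ∑ j : Fin n, (X j i)^2 := by
    simp [Matrix.trace, Matrix.diag, Matrix.mul_apply, sq]
  rw [hexp] at h
  ext i j
  have h1 : ∀ a ∈ Finset.univ, (0:ℝ) ≤ ∑ b : Fin n, (X b a)^2 :=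
    fun a _ => Finset.sum_nonneg fun b _ => sq_nonneg _
  have h2 := (Finset.sum_eq_zero_iff_of_nonneg h1).mp h j (Finset.mem_univ _)
  have h3 := (Finset.sum_eq_zero_iff_of_nonneg (fun b _ => sq_nonneg (X b j))).mp h2 i
    (Finset.mem_univ _)
  simpa using pow_eq_zero_iff (n := 2) (by norm_num) |>.mp h3

lemma fuglede_real {n : ℕ} (N M : Matrix (Fin n) (Fin n) ℝ)
    (hN : Nᵀ * N = N * Nᵀ) (h : N * M = M * N) : Nᵀ * M = M * Nᵀ := by
  have key : Matrix.trace ((Nᵀ * M - M * Nᵀ)ᵀ * (Nᵀ * M - M * Nᵀ)) = 0 := by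
    have e1 : (Nᵀ * M - M * Nᵀ)ᵀ = Mᵀ * N - N * Mᵀ := by
      simp [Matrix.transpose_sub, Matrix.transpose_mul]
    rw [e1]
    have expand : (Mᵀ * N - N * Mᵀ) * (Nᵀ * M - M * Nᵀ)
        = Mᵀ * N * (Nᵀ * M) - Mᵀ * N * (M * Nᵀ) - N * Mᵀ * (Nᵀ * M) + N * Mᵀ * (M * Nᵀ) := by
      noncomm_ring
    rw [expand]
    have t1 : Matrix.trace (Mᵀ * N * (Nᵀ * M)) = Matrix.trace (Mᵀ * (Nᵀ * N) * M) := by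
      rw [show Mᵀ * N * (Nᵀ * M) = Mᵀ * (N * Nᵀ) * M by noncomm_ring, hN]
    have t2 : Matrix.trace (Mᵀ * N * (M * Nᵀ)) = Matrix.trace ((Mᵀ * M) * (Nᵀ * N)) := by
      rw [show Mᵀ * N * (M * Nᵀ) = Mᵀ * (N * M) * Nᵀ by noncomm_ring, h]
      rw [show Mᵀ * (M * N) * Nᵀ = (Mᵀ * M) * (N * Nᵀ) by noncomm_ring, hN]
    have t3 : Matrix.trace (N * Mᵀ * (Nᵀ * M)) = Matrix.trace (Mᵀ * (Nᵀ * N) * M) := by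
      calc Matrix.trace (N * Mᵀ * (Nᵀ * M)) = Matrix.trace ((Nᵀ * M) * (N * Mᵀ)) :=
            Matrix.trace_mul_comm _ _
        _ = Matrix.trace (Nᵀ * (M * N) * Mᵀ) := by congr 1; noncomm_ring
        _ = Matrix.trace (Nᵀ * (N * M) * Mᵀ) := by rw [← h]
        _ = Matrix.trace ((Nᵀ * N * M) * Mᵀ) := by congr 1; noncomm_ring
        _ = Matrix.trace (Mᵀ * (Nᵀ * N * M)) := Matrix.trace_mul_comm _ _
        _ = Matrix.trace (Mᵀ * (Nᵀ * N) * M) := by congr 1; noncomm_ring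
    have t4 : Matrix.trace (N * Mᵀ * (M * Nᵀ)) = Matrix.trace ((Mᵀ * M) * (Nᵀ * N)) := by
      calc Matrix.trace (N * Mᵀ * (M * Nᵀ)) = Matrix.trace ((M * Nᵀ) * (N * Mᵀ)) :=
            Matrix.trace_mul_comm _ _
        _ = Matrix.trace ((M * (Nᵀ * N)) * Mᵀ) := by congr 1; noncomm_ring
        _ = Matrix.trace (Mᵀ * (M * (Nᵀ * N))) := Matrix.trace_mul_comm _ _
        _ = Matrix.trace ((Mᵀ * M) * (Nᵀ * N)) := by congr 1; noncomm_ring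
    rw [Matrix.trace_add, Matrix.trace_sub, Matrix.trace_sub, t1, t2, t3, t4]
    ring
  have := eq_zero_of_trace_transpose_mul_self _ key
  linear_combination (norm := noncomm_ring) this

lemma exists_joint_eigenbasis {n : ℕ} {ι : Type*}
    (W : ι → (EuclideanSpace ℝ (Fin n) →ₗ[ℝ] EuclideanSpace ℝ (Fin n)))
    (hsym : ∀ i, (W i).IsSymmetric) (hcomm : ∀ i j, Commute (W i) (W j)) :
    ∃ u : OrthonormalBasis (Fin n) ℝ (EuclideanSpace ℝ (Fin n)),
      ∀ j i, ∃ c : ℝ, W i (u j) = c • u j := by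
  classical
  have internal : DirectSum.IsInternal
      (fun χ : ι → ℝ => ⨅ p, Module.End.eigenspace (W p) (χ p)) :=
    LinearMap.IsSymmetric.LinearMap.IsSymmetric.directSum_isInternal_of_pairwise_commute
      hsym (fun i j _ => hcomm i j)
  set V : (ι → ℝ) → Submodule ℝ (EuclideanSpace ℝ (Fin n)) :=
    fun χ => ⨅ p, Module.End.eigenspace (W p) (χ p) with hV
  have obs : ∀ χ, OrthonormalBasis (Fin (Module.finrank ℝ (V χ))) ℝ (V χ) :=
    fun χ => stdOrthonormalBasis ℝ (V χ)
  let vfam : ∀ χ, Module.Basis (Fin (Module.finrank ℝ (V χ))) ℝ (V χ) := fun χ => (obs χ).toBasis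
  let b := internal.collectedBasis vfam
  have horth : Orthonormal ℝ b :=
    DirectSum.IsInternal.collectedBasis_orthonormal
      (LinearMap.IsSymmetric.orthogonalFamily_iInf_eigenspaces hsym) internal
      (fun χ => (obs χ).orthonormal)
  letI : Fintype (Σ χ : ι → ℝ, Fin (Module.finrank ℝ (V χ))) := FiniteDimensional.fintypeBasisIndex b
  have hcard : Fintype.card (Σ χ : ι → ℝ, Fin (Module.finrank ℝ (V χ))) = n := by
    rw [← Module.finrank_eq_card_basis b, finrank_euclideanSpace_fin]
  let e := Fintype.equivFinOfCardEq hcard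
  let ob := (b.toOrthonormalBasis horth).reindex e
  refine ⟨ob, fun j i => ?_⟩
  have hmem : b (e.symm j) ∈ V ((e.symm j).1) := internal.collectedBasis_mem vfam _
  have hmem2 : b (e.symm j) ∈ Module.End.eigenspace (W i) ((e.symm j).1 i) :=
    (Submodule.mem_iInf _).mp hmem i
  refine ⟨(e.symm j).1 i, ?_⟩
  have : ob j = b (e.symm j) := by
    simp [ob, OrthonormalBasis.reindex_apply, Module.Basis.coe_toOrthonormalBasis]
  rw [this]
  simpa [Module.End.mem_eigenspace_iff] using hmem2

lemma exists_simplex_weights {n k : ℕ} (hn : Finset.univ.Nonempty (α := Fin n))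
    (μ : Fin n → (Fin k → ℝ) → ℝ)
    (hconv : ∀ j (α β : Fin k → ℝ) (t s : ℝ), 0 ≤ t → 0 ≤ s → t + s = 1 →
      μ j (t • α + s • β) ≤ t * μ j α + s * μ j β)
    (c c' : ℝ) (hcc : c < c')
    (hc' : ∀ α, c' ≤ Finset.univ.sup' hn (fun j => μ j α)) :
    ∃ q : Fin n → ℝ, (∀ j, 0 ≤ q j) ∧ (∑ j, q j) = 1 ∧
      ∀ α, c ≤ ∑ j, q j * μ j α := by
  classical
  set S : Set (Fin n → ℝ) := {x | ∃ α, ∀ j, μ j α ≤ x j} with hS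
  have hupward : ∀ x ∈ S, ∀ y : Fin n → ℝ, (∀ j, x j ≤ y j) → y ∈ S := by
    rintro x ⟨α, hα⟩ y hxy
    exact ⟨α, fun j => (hα j).trans (hxy j)⟩
  have hSconv : Convex ℝ S := by
    rintro x ⟨α, hα⟩ y ⟨β, hβ⟩ t s ht hs hts
    refine ⟨t • α + s • β, fun j => ?_⟩
    calc μ j (t • α + s • β) ≤ t * μ j α + s * μ j β := hconv j α β t s ht hs hts
      _ ≤ t * x j + s * y j := by
          gcongr <;> [exact hα j; exact hβ j]
      _ = (t • x + s • y) j := by simp [Pi.add_apply]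
  set z : Fin n → ℝ := fun _ => c with hz
  have hznot : z ∉ closure S := by
    intro hmem
    obtain ⟨y, hyS, hdist⟩ := Metric.mem_closure_iff.mp hmem (c' - c) (by linarith)
    obtain ⟨α, hα⟩ := hyS
    have : Finset.univ.sup' hn (fun j => μ j α) < c' := by
      rw [Finset.sup'_lt_iff]
      intro j _
      have h1 : dist (z j) (y j) ≤ dist z y := dist_le_pi_dist z y j
      have h2 : |y j - c| < c' - c := by
        rw [abs_sub_comm]
        calc |c - y j| = dist (z j) (y j) := by simp [hz, Real.dist_eq]
          _ ≤ dist z y := h1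
          _ < c' - c := hdist
      have := hα j
      have := (abs_lt.mp h2).2
      linarith
    exact absurd (hc' α) (not_le.mpr this)
  obtain ⟨f, u, hfz, hfS⟩ := geometric_hahn_banach_point_closed hSconv.closure
    isClosed_closure hznot
  set q0 : Fin n → ℝ := fun j => f (Pi.single j 1) with hq0
  have hfx : ∀ x : Fin n → ℝ, f x = ∑ j, x j * q0 j := by
    intro x
    have hsingle : ∀ j : Fin n, (fun l => if j = l then (1:ℝ) else 0) = Pi.single j 1 :=
      fun j => funext fun l => by simp [Pi.single_apply, eq_comm]
    conv_lhs => rw [pi_eq_sum_univ x]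
    rw [map_sum]
    exact Finset.sum_congr rfl fun j _ => by
      rw [_root_.map_smul, hsingle j]; simp [hq0, smul_eq_mul]
  have hfmem : ∀ x ∈ S, u < f x := fun x hx => hfS x (subset_closure hx)
  set x0 : Fin n → ℝ := fun j => μ j 0 with hx0
  have hx0S : x0 ∈ S := ⟨0, fun j => le_refl _⟩
  have hq0nonneg : ∀ j, 0 ≤ q0 j := by
    intro j
    by_contra hneg
    push_neg at hneg
    have hux0 : u < f x0 := hfmem x0 hx0S
    set t : ℝ := (u - f x0) / q0 j with ht
    have htpos : 0 < t := div_pos_of_neg_of_neg (by linarith) hneg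
    have hyS : x0 + t • (Pi.single j 1 : Fin n → ℝ) ∈ S := by
      refine hupward x0 hx0S _ fun l => ?_
      simp only [Pi.add_apply, Pi.smul_apply]
      have : (0:ℝ) ≤ t • (Pi.single j 1 : Fin n → ℝ) l := by
        rcases eq_or_ne l j with rfl | hlj
        · simp [smul_eq_mul]; positivity
        · simp [Pi.single_eq_of_ne hlj]
      linarith
    have := hfmem _ hyS
    rw [map_add, _root_.map_smul, smul_eq_mul] at this
    have hval : f (Pi.single j 1) = q0 j := rfl
    rw [hval, ht, div_mul_cancel₀ _ (ne_of_lt hneg)] at this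
    linarith
  have hsumpos : 0 < ∑ j, q0 j := by
    rcases lt_or_ge 0 (∑ j, q0 j) with h | h
    · exact h
    · exfalso
      have hall : ∀ j ∈ Finset.univ, q0 j = 0 := by
        have heq : ∑ j, q0 j = 0 :=
          le_antisymm h (Finset.sum_nonneg fun j _ => hq0nonneg j)
        exact (Finset.sum_eq_zero_iff_of_nonneg (fun j _ => hq0nonneg j)).mp heq
      have hfz0 : f z = 0 := by
        rw [hfx]; exact Finset.sum_eq_zero fun j _ => by rw [hall j (Finset.mem_univ j), mul_zero]
      have hfx00 : f x0 = 0 := by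
        rw [hfx]; exact Finset.sum_eq_zero fun j _ => by rw [hall j (Finset.mem_univ j), mul_zero]
      have := hfmem x0 hx0S
      linarith
  refine ⟨fun j => q0 j / (∑ l, q0 l), fun j => div_nonneg (hq0nonneg j) hsumpos.le, ?_, ?_⟩
  · rw [← Finset.sum_div, div_self hsumpos.ne']
  · intro α
    have hxαS : (fun j => μ j α) ∈ S := ⟨α, fun j => le_refl _⟩
    have h1 : u < ∑ j, μ j α * q0 j := by
      have := hfmem _ hxαS
      rwa [hfx] at this
    have h2 : c * ∑ j, q0 j < u := by
      have := hfz
      rw [hfx] at this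
      calc c * ∑ j, q0 j = ∑ j, z j * q0 j := by rw [Finset.mul_sum]
        _ < u := this
    have key : c * ∑ j, q0 j ≤ ∑ j, μ j α * q0 j := by linarith
    have : ∑ j, (q0 j / (∑ l, q0 l)) * μ j α = (∑ j, μ j α * q0 j) / (∑ l, q0 l) := by
      rw [Finset.sum_div]
      exact Finset.sum_congr rfl fun j _ => by ring
    rw [this, le_div_iff₀ hsumpos]
    linarith


/-- Max-min equals min-max for pairwise commuting normal real matrices
(Greenbaum–Gurvits formulation, real case). -/
theorem maxmin_eq_minmax_commuting_normal_real
    (n k : ℕ) (A : Fin (k + 1) → Matrix (Fin n) (Fin n) ℝ)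
    (hnormal : ∀ i, (A i)ᵀ * A i = A i * (A i)ᵀ)
    (hcomm : ∀ i j, A i * A j = A j * A i) :
    (⨆ v : {v : EuclideanSpace ℝ (Fin n) // ‖v‖ = 1},
      ⨅ α : Fin k → ℝ,
        ‖Matrix.toEuclideanCLM (𝕜 := ℝ) (A 0) v.1
          - ∑ i : Fin k, α i • Matrix.toEuclideanCLM (𝕜 := ℝ) (A i.succ) v.1‖)
    = ⨅ α : Fin k → ℝ,
        ‖Matrix.toEuclideanCLM (𝕜 := ℝ) (A 0 - ∑ i : Fin k, α i • A i.succ)‖ := by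
  classical
  rcases Nat.eq_zero_or_pos n with hn0 | hnpos
  · subst hn0
    have hall0 : ∀ w : EuclideanSpace ℝ (Fin 0), w = 0 := fun w => by
      ext i; exact i.elim0
    haveI : IsEmpty {v : EuclideanSpace ℝ (Fin 0) // ‖v‖ = 1} := by
      constructor
      rintro ⟨v, hv⟩
      rw [hall0 v, norm_zero] at hv
      exact one_ne_zero hv.symm
    have hzero : ∀ α : Fin k → ℝ,
        ‖Matrix.toEuclideanCLM (𝕜 := ℝ) (A 0 - ∑ i : Fin k, α i • A i.succ)‖ = 0 := by
      intro α
      refine le_antisymm ?_ (norm_nonneg _)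
      refine ContinuousLinearMap.opNorm_le_bound _ le_rfl fun x => ?_
      rw [hall0 (Matrix.toEuclideanCLM (𝕜 := ℝ) (A 0 - ∑ i : Fin k, α i • A i.succ) x),
        norm_zero, zero_mul]
    rw [Real.iSup_of_isEmpty]
    simp only [hzero]
    rw [ciInf_const]
  -- main case
  haveI : Nonempty (Fin n) := ⟨⟨0, hnpos⟩⟩
  set E := EuclideanSpace ℝ (Fin n)
  set T : Fin (k+1) → E →L[ℝ] E := fun a => Matrix.toEuclideanCLM (𝕜 := ℝ) (A a) with hT
  set M : (Fin k → ℝ) → E →L[ℝ] E := fun α => T 0 - ∑ i : Fin k, α i • T i.succ with hM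
  -- rewrite both sides in terms of M
  have hpt : ∀ (α : Fin k → ℝ) (v : E),
      Matrix.toEuclideanCLM (𝕜 := ℝ) (A 0) v
        - ∑ i : Fin k, α i • Matrix.toEuclideanCLM (𝕜 := ℝ) (A i.succ) v = M α v := by
    intro α v
    simp [hM, ContinuousLinearMap.sub_apply, ContinuousLinearMap.sum_apply,
      ContinuousLinearMap.smul_apply, hT]
  have hMeq : ∀ α : Fin k → ℝ,
      Matrix.toEuclideanCLM (𝕜 := ℝ) (A 0 - ∑ i : Fin k, α i • A i.succ) = M α := by
    intro α
    simp only [map_sub, map_sum, _root_.map_smul, hM, hT]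
  rw [iInf_congr fun α => by rw [hMeq α]]
  rw [iSup_congr fun v => iInf_congr fun α => by rw [hpt α v.1]]
  -- matrix-level commutation facts via Fuglede
  have hTab : ∀ a b, (A a)ᵀ * A b = A b * (A a)ᵀ :=
    fun a b => fuglede_real _ _ (hnormal a) (hcomm a b)
  have hTTab : ∀ a b, (A a)ᵀ * (A b)ᵀ = (A b)ᵀ * (A a)ᵀ := by
    intro a b
    rw [← Matrix.transpose_mul, ← Matrix.transpose_mul, hcomm]
  -- CLM-level facts
  have hstar : ∀ a, star (T a) = Matrix.toEuclideanCLM (𝕜 := ℝ) ((A a)ᵀ) := by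
    intro a
    have h1 : star (A a) = (A a)ᵀ := by
      rw [Matrix.star_eq_conjTranspose, Matrix.conjTranspose_eq_transpose_of_trivial]
    have h2 : star (T a) = Matrix.toEuclideanCLM (𝕜 := ℝ) (star (A a)) := (map_star _ _).symm
    rw [h2, h1]
  have hc1 : ∀ a b, Commute (T a) (T b) := by
    intro a b
    have := congrArg (Matrix.toEuclideanCLM (𝕜 := ℝ)) (hcomm a b)
    simpa [_root_.map_mul, Commute, SemiconjBy] using this
  have hc2 : ∀ a b, Commute (star (T a)) (T b) := by
    intro a b
    have := congrArg (Matrix.toEuclideanCLM (𝕜 := ℝ)) (hTab a b)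
    simpa [_root_.map_mul, hstar, Commute, SemiconjBy] using this
  have hc3 : ∀ a b, Commute (star (T a)) (star (T b)) := by
    intro a b
    have := congrArg (Matrix.toEuclideanCLM (𝕜 := ℝ)) (hTTab a b)
    simpa [_root_.map_mul, hstar, Commute, SemiconjBy] using this
  have hc2' : ∀ a b, Commute (T a) (star (T b)) := fun a b => (hc2 b a).symm
  -- the symmetric generating family
  set Wc : Fin (k+1) × Fin (k+1) → E →L[ℝ] E :=
    fun p => star (T p.1) * T p.2 + star (T p.2) * T p.1 with hWc
  have hWcsa : ∀ p, _root_.IsSelfAdjoint (Wc p) := by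
    intro p
    simp only [_root_.IsSelfAdjoint, hWc, star_add, star_mul, star_star]
    have h := star_add (star (T p.1) * T p.2) (star (T p.2) * T p.1)
    rw [star_mul, star_mul, star_star, star_star] at h
    exact h.trans (add_comm _ _)
  have hWccomm : ∀ p q, Commute (Wc p) (Wc q) := by
    intro p q
    have h : ∀ (a b x y : Fin (k+1)),
        Commute (star (T a) * T b) (star (T x) * T y) := by
      intro a b x y
      exact ((hc3 a x).mul_right (hc2 a y)).mul_left ((hc2' b x).mul_right (hc1 b y))
    exact ((h _ _ _ _).add_right (h _ _ _ _)).add_left ((h _ _ _ _).add_right (h _ _ _ _))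
  set W : Fin (k+1) × Fin (k+1) → (E →ₗ[ℝ] E) := fun p => (Wc p : E →ₗ[ℝ] E) with hW
  have hWsym : ∀ p, (W p).IsSymmetric := fun p => (hWcsa p).isSymmetric
  have hWcommL : ∀ p q, Commute (W p) (W q) := by
    intro p q
    have h := hWccomm p q
    refine LinearMap.ext fun v => ?_
    have h' := congrArg (fun (X : E →L[ℝ] E) => X v) h
    simpa [hW, Module.End.mul_apply, ContinuousLinearMap.mul_apply] using h'
  obtain ⟨u, hu⟩ := exists_joint_eigenbasis W hWsym hWcommL
  -- eigenvalue functions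
  set μ : Fin n → (Fin k → ℝ) → ℝ := fun j α => ‖M α (u j)‖^2 with hμ
  have hμnonneg : ∀ j α, 0 ≤ μ j α := fun j α => sq_nonneg _
  -- M as a sum
  set cc : (Fin k → ℝ) → Fin (k+1) → ℝ := fun α => Fin.cons 1 (fun i => -α i) with hcc
  have hMsum : ∀ α, M α = ∑ a, cc α a • T a := by
    intro α
    have hstep : ∑ a, cc α a • T a = cc α 0 • T 0 + ∑ i : Fin k, cc α i.succ • T i.succ :=
      Fin.sum_univ_succ _
    have h0 : cc α 0 • T 0 = T 0 := by rw [show cc α 0 = 1 from rfl, one_smul]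
    have hsucc : ∀ i : Fin k, cc α i.succ • T i.succ = -(α i • T i.succ) := fun i => by
      rw [show cc α i.succ = -α i from rfl]
      exact neg_smul (α i) (T i.succ)
    rw [hstep, h0, Finset.sum_congr rfl fun i _ => hsucc i, Finset.sum_neg_distrib,
      ← sub_eq_add_neg, hM]
  -- key eigen property
  have heig : ∀ j α, (star (M α) * M α) (u j) = μ j α • u j := by
    intro j α
    have hstarM : star (M α) = ∑ a, cc α a • star (T a) := by
      rw [hMsum α, ContinuousLinearMap.star_eq_adjoint, map_sum]
      refine Finset.sum_congr rfl fun a _ => ?_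
      rw [map_smulₛₗ, ContinuousLinearMap.star_eq_adjoint]
      norm_num
    have hprod : star (M α) * M α
        = ∑ a, ∑ b, (cc α a * cc α b) • (star (T a) * T b) := by
      rw [hstarM, hMsum α, Finset.sum_mul_sum]
      refine Finset.sum_congr rfl fun a _ => Finset.sum_congr rfl fun b _ => ?_
      ext v
      simp only [ContinuousLinearMap.mul_apply, ContinuousLinearMap.smul_apply, _root_.map_smul,
        smul_smul, mul_comm]
    -- eigen decomposition of each W
    have hk : ∀ p, ∃ c : ℝ, W p (u j) = c • u j := fun p => hu j p
    choose κ hκ using hk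
    have happ : (star (M α) * M α) (u j)
        = ∑ a, ∑ b, (cc α a * cc α b) • ((star (T a) * T b) (u j)) := by
      rw [hprod]
      simp [ContinuousLinearMap.sum_apply, ContinuousLinearMap.smul_apply]
    have hPsum : ∀ a b, (star (T a) * T b) (u j) + (star (T b) * T a) (u j) = κ (a, b) • u j := by
      intro a b
      have h := hκ (a, b)
      have hWap : W (a,b) (u j)
          = (star (T a) * T b) (u j) + (star (T b) * T a) (u j) := by
        simp [hW, hWc, ContinuousLinearMap.add_apply]
      rw [← hWap]
      exact h
    set r : ℝ := ∑ a, ∑ b, (cc α a * cc α b) * κ (a, b) with hr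
    have hswap : (∑ a, ∑ b, (cc α a * cc α b) • ((star (T b) * T a) (u j)))
        = ∑ a, ∑ b, (cc α a * cc α b) • ((star (T a) * T b) (u j)) := by
      rw [Finset.sum_comm]
      exact Finset.sum_congr rfl fun a _ => Finset.sum_congr rfl fun b _ => by rw [mul_comm]
    have hdouble : (∑ a, ∑ b, (cc α a * cc α b) • ((star (T a) * T b) (u j)))
        + (∑ a, ∑ b, (cc α a * cc α b) • ((star (T b) * T a) (u j))) = r • u j := by
      rw [hr, Finset.sum_smul, ← Finset.sum_add_distrib]
      refine Finset.sum_congr rfl fun a _ => ?_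
      rw [Finset.sum_smul, ← Finset.sum_add_distrib]
      refine Finset.sum_congr rfl fun b _ => ?_
      rw [← smul_add, hPsum a b, smul_smul]
    have h2S : (∑ a, ∑ b, (cc α a * cc α b) • ((star (T a) * T b) (u j)))
        + (∑ a, ∑ b, (cc α a * cc α b) • ((star (T a) * T b) (u j))) = r • u j := by
      nth_rewrite 2 [← hswap]
      exact hdouble
    have hSeq : (∑ a, ∑ b, (cc α a * cc α b) • ((star (T a) * T b) (u j)))
        = (2⁻¹ * r) • u j := by
      have h2 : (2:ℝ) • (∑ a, ∑ b, (cc α a * cc α b) • ((star (T a) * T b) (u j)))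
          = r • u j := by rw [two_smul]; exact h2S
      calc (∑ a, ∑ b, (cc α a * cc α b) • ((star (T a) * T b) (u j)))
          = (2:ℝ)⁻¹ • ((2:ℝ) • (∑ a, ∑ b, (cc α a * cc α b) • ((star (T a) * T b) (u j)))) := by
            rw [smul_smul]; norm_num
        _ = (2:ℝ)⁻¹ • (r • u j) := by rw [h2]
        _ = (2⁻¹ * r) • u j := by rw [smul_smul]
    have hfinal : (star (M α) * M α) (u j) = (2⁻¹ * r) • u j := by
      rw [happ]
      exact hSeq
    -- identify the eigenvalue
    have hunit : ⟪u j, u j⟫ = 1 := by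
      have := u.orthonormal.1 j
      rw [real_inner_self_eq_norm_sq, this, one_pow]
    have hid : (2⁻¹ * r) = μ j α := by
      have h1 : ⟪u j, (star (M α) * M α) (u j)⟫ = 2⁻¹ * r := by
        rw [hfinal, real_inner_smul_right, hunit, mul_one]
      have h2 : ⟪u j, (star (M α) * M α) (u j)⟫ = μ j α := by
        rw [ContinuousLinearMap.mul_apply, ContinuousLinearMap.star_eq_adjoint,
          ContinuousLinearMap.adjoint_inner_right, real_inner_self_eq_norm_sq]
      rw [← h1, h2]
    rw [hfinal, hid]
  -- expansion of ‖M α v‖²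
  have hexp : ∀ (α : Fin k → ℝ) (v : E),
      ‖M α v‖^2 = ∑ j, (u.repr v j)^2 * μ j α := by
    intro α v
    have hv := u.sum_repr v
    calc ‖M α v‖^2 = ⟪v, (star (M α) * M α) v⟫ := by
          rw [ContinuousLinearMap.mul_apply, ContinuousLinearMap.star_eq_adjoint,
            ContinuousLinearMap.adjoint_inner_right, real_inner_self_eq_norm_sq]
      _ = ⟪∑ j, u.repr v j • u j, (star (M α) * M α) (∑ j, u.repr v j • u j)⟫ := by
          rw [hv]
      _ = ⟪∑ j, u.repr v j • u j, ∑ j, (u.repr v j * μ j α) • u j⟫ := by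
          congr 1
          rw [map_sum]
          refine Finset.sum_congr rfl fun j _ => ?_
          rw [_root_.map_smul, heig j α, smul_smul]
      _ = ∑ j, u.repr v j * (u.repr v j * μ j α) := by
          simpa using u.orthonormal.inner_sum (fun j => u.repr v j)
            (fun j => u.repr v j * μ j α) Finset.univ
      _ = ∑ j, (u.repr v j)^2 * μ j α := Finset.sum_congr rfl fun j _ => by ring
  -- Parseval
  have hpars : ∀ v : E, ∑ j, (u.repr v j)^2 = ‖v‖^2 := by
    intro v
    have h1 : ‖u.repr v‖ = ‖v‖ := u.repr.norm_map v
    rw [← h1, EuclideanSpace.norm_eq, Real.sq_sqrt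
      (Finset.sum_nonneg fun j _ => sq_nonneg _)]
    exact Finset.sum_congr rfl fun j _ => by rw [Real.norm_eq_abs, sq_abs]
  have hn : (Finset.univ : Finset (Fin n)).Nonempty := Finset.univ_nonempty
  set maxμ : (Fin k → ℝ) → ℝ := fun α => Finset.univ.sup' hn (fun j => μ j α) with hmaxμ
  have hmaxnonneg : ∀ α, 0 ≤ maxμ α := by
    intro α
    obtain ⟨j⟩ := (inferInstance : Nonempty (Fin n))
    rw [hmaxμ]
    exact le_trans (hμnonneg j α) (Finset.le_sup' (fun j => μ j α) (Finset.mem_univ j))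
  -- operator norm bound
  have hopnorm : ∀ α, ‖M α‖ ≤ Real.sqrt (maxμ α) := by
    intro α
    refine ContinuousLinearMap.opNorm_le_bound _ (Real.sqrt_nonneg _) fun v => ?_
    have h1 : ‖M α v‖^2 ≤ maxμ α * ‖v‖^2 := by
      rw [hexp α v, ← hpars v, Finset.mul_sum, hmaxμ]
      refine Finset.sum_le_sum fun j _ => ?_
      calc (u.repr v j)^2 * μ j α
          ≤ (u.repr v j)^2 * Finset.univ.sup' hn (fun j => μ j α) :=
            mul_le_mul_of_nonneg_left (Finset.le_sup' (fun j => μ j α) (Finset.mem_univ j))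
              (sq_nonneg _)
        _ = Finset.univ.sup' hn (fun j => μ j α) * (u.repr v j)^2 := by ring
    calc ‖M α v‖ = Real.sqrt (‖M α v‖^2) := (Real.sqrt_sq (norm_nonneg _)).symm
      _ ≤ Real.sqrt (maxμ α * ‖v‖^2) := Real.sqrt_le_sqrt h1
      _ = Real.sqrt (maxμ α) * ‖v‖ := by
          rw [Real.sqrt_mul (hmaxnonneg α), Real.sqrt_sq (norm_nonneg v)]
  -- construction of test vectors from simplex weights
  have hvq : ∀ q : Fin n → ℝ, (∀ j, 0 ≤ q j) → (∑ j, q j) = 1 →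
      ∃ v : E, ‖v‖ = 1 ∧ ∀ α, ‖M α v‖^2 = ∑ j, q j * μ j α := by
    intro q hq hq1
    set v : E := ∑ j, Real.sqrt (q j) • u j with hv
    have hrepr : ∀ j, u.repr v j = Real.sqrt (q j) := by
      intro j
      rw [u.repr_apply_apply, hv]
      exact u.orthonormal.inner_right_sum (fun l => Real.sqrt (q l)) (Finset.mem_univ j)
    have hnorm2 : ‖v‖^2 = 1 := by
      rw [← hpars v]
      rw [Finset.sum_congr rfl fun j _ => by rw [hrepr j, Real.sq_sqrt (hq j)]]
      exact hq1
    refine ⟨v, ?_, ?_⟩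
    · calc ‖v‖ = Real.sqrt (‖v‖^2) := (Real.sqrt_sq (norm_nonneg _)).symm
        _ = 1 := by rw [hnorm2, Real.sqrt_one]
    · intro α
      rw [hexp α v]
      exact Finset.sum_congr rfl fun j _ => by rw [hrepr j, Real.sq_sqrt (hq j)]
  -- convexity of μ j
  have hconv : ∀ j (α β : Fin k → ℝ) (t s : ℝ), 0 ≤ t → 0 ≤ s → t + s = 1 →
      μ j (t • α + s • β) ≤ t * μ j α + s * μ j β := by
    intro j α β t s ht hs hts
    have haff : M (t • α + s • β) = t • M α + s • M β := by
      ext v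
      simp only [hM, ContinuousLinearMap.sub_apply, ContinuousLinearMap.sum_apply,
        ContinuousLinearMap.smul_apply, ContinuousLinearMap.add_apply]
      have ht0 : t • T 0 v + s • T 0 v = T 0 v := by
        rw [← add_smul, hts, one_smul]
      have hL : ∑ i : Fin k, ((t • α + s • β) i) • T i.succ v
          = t • (∑ i : Fin k, α i • T i.succ v) + s • (∑ i : Fin k, β i • T i.succ v) := by
        rw [Finset.smul_sum, Finset.smul_sum, ← Finset.sum_add_distrib]
        refine Finset.sum_congr rfl fun i _ => ?_
        have : (t • α + s • β) i = t * α i + s * β i := rfl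
        rw [this, add_smul, smul_smul, smul_smul]
      rw [hL, smul_sub, smul_sub, sub_add_sub_comm, ht0]
    have hb : ‖M (t • α + s • β) (u j)‖ ≤ t * ‖M α (u j)‖ + s * ‖M β (u j)‖ := by
      rw [haff]
      calc ‖(t • M α + s • M β) (u j)‖ = ‖t • (M α (u j)) + s • (M β (u j))‖ := by
            simp [ContinuousLinearMap.add_apply, ContinuousLinearMap.smul_apply]
        _ ≤ ‖t • (M α (u j))‖ + ‖s • (M β (u j))‖ := norm_add_le _ _
        _ = t * ‖M α (u j)‖ + s * ‖M β (u j)‖ := by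
            rw [norm_smul, norm_smul, Real.norm_eq_abs, Real.norm_eq_abs,
              abs_of_nonneg ht, abs_of_nonneg hs]
    have hsq : ‖M (t • α + s • β) (u j)‖^2 ≤ (t * ‖M α (u j)‖ + s * ‖M β (u j)‖)^2 :=
      pow_le_pow_left₀ (norm_nonneg _) hb 2
    have hfin : (t * ‖M α (u j)‖ + s * ‖M β (u j)‖)^2
        ≤ t * ‖M α (u j)‖^2 + s * ‖M β (u j)‖^2 := by
      nlinarith [mul_nonneg (mul_nonneg ht hs) (sq_nonneg (‖M α (u j)‖ - ‖M β (u j)‖)),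
        sq_nonneg (‖M α (u j)‖ - ‖M β (u j)‖), norm_nonneg (M α (u j)), norm_nonneg (M β (u j))]
    calc μ j (t • α + s • β) = ‖M (t • α + s • β) (u j)‖^2 := rfl
      _ ≤ (t * ‖M α (u j)‖ + s * ‖M β (u j)‖)^2 := hsq
      _ ≤ t * μ j α + s * μ j β := hfin
  -- sup / inf bookkeeping
  haveI : Nonempty {v : E // ‖v‖ = 1} := by
    refine ⟨⟨EuclideanSpace.single (⟨0, hnpos⟩ : Fin n) (1:ℝ), ?_⟩⟩
    rw [EuclideanSpace.norm_single, norm_one]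
  have hbddB : ∀ v : {v : E // ‖v‖ = 1}, BddBelow (Set.range fun α => ‖M α v.1‖) := by
    intro v
    exact ⟨0, by rintro x ⟨α, rfl⟩; exact norm_nonneg _⟩
  have hbddB' : BddBelow (Set.range fun α => ‖M α‖) :=
    ⟨0, by rintro x ⟨α, rfl⟩; exact norm_nonneg _⟩
  have hbddBmax : BddBelow (Set.range maxμ) :=
    ⟨0, by rintro x ⟨α, rfl⟩; exact hmaxnonneg α⟩
  have hle_inner : ∀ v : {v : E // ‖v‖ = 1}, (⨅ α, ‖M α v.1‖) ≤ ‖M 0‖ := by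
    intro v
    refine ciInf_le_of_le (hbddB v) 0 ?_
    calc ‖M 0 v.1‖ ≤ ‖M 0‖ * ‖v.1‖ := ContinuousLinearMap.le_opNorm _ _
      _ = ‖M 0‖ := by rw [v.2, mul_one]
  have hbddA : BddAbove (Set.range fun v : {v : E // ‖v‖ = 1} => ⨅ α, ‖M α v.1‖) :=
    ⟨‖M 0‖, by rintro x ⟨v, rfl⟩; exact hle_inner v⟩
  set L := ⨆ v : {v : E // ‖v‖ = 1}, ⨅ α, ‖M α v.1‖ with hL
  refine le_antisymm ?_ ?_
  · -- easy direction
    refine ciSup_le fun v => le_ciInf fun α => ?_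
    refine ciInf_le_of_le (hbddB v) α ?_
    calc ‖M α v.1‖ ≤ ‖M α‖ * ‖v.1‖ := ContinuousLinearMap.le_opNorm _ _
      _ = ‖M α‖ := by rw [v.2, mul_one]
  · -- hard direction
    set cstar := ⨅ α, maxμ α with hcstar
    have hcstar0 : 0 ≤ cstar := le_ciInf fun α => hmaxnonneg α
    have hA : (⨅ α, ‖M α‖) ≤ Real.sqrt cstar := by
      refine le_of_forall_pos_le_add fun δ hδ => ?_
      have hlt : cstar < cstar + δ^2 := by nlinarith
      obtain ⟨α₀, hα₀⟩ := exists_lt_of_ciInf_lt hlt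
      have h1 : (⨅ α, ‖M α‖) ≤ ‖M α₀‖ := ciInf_le hbddB' α₀
      have h2 : ‖M α₀‖ ≤ Real.sqrt (maxμ α₀) := hopnorm α₀
      have h3 : Real.sqrt (maxμ α₀) ≤ Real.sqrt (cstar + δ^2) := Real.sqrt_le_sqrt hα₀.le
      have h4 : Real.sqrt (cstar + δ^2) ≤ Real.sqrt cstar + δ := by
        rw [show Real.sqrt cstar + δ = Real.sqrt ((Real.sqrt cstar + δ)^2) by
          rw [Real.sqrt_sq (by positivity)]]
        refine Real.sqrt_le_sqrt ?_
        nlinarith [Real.sq_sqrt hcstar0, Real.sqrt_nonneg cstar]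
      linarith
    have hB : Real.sqrt cstar ≤ L := by
      by_contra hcon
      push_neg at hcon
      have hL0 : 0 ≤ L := by
        obtain ⟨v⟩ := (inferInstance : Nonempty {v : E // ‖v‖ = 1})
        exact le_trans (le_ciInf fun α => norm_nonneg _) (le_ciSup hbddA v)
      have hL2 : L^2 < cstar := by
        have := Real.sq_sqrt hcstar0
        nlinarith [Real.sqrt_nonneg cstar]
      set c := (L^2 + cstar)/2 with hc
      have hcc : c < cstar := by rw [hc]; linarith
      have hc' : ∀ α, cstar ≤ maxμ α := fun α => ciInf_le hbddBmax α
      obtain ⟨q, hq0, hq1, hqval⟩ := exists_simplex_weights hn μ hconv c cstar hcc hc'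
      obtain ⟨v, hv1, hv2⟩ := hvq q hq0 hq1
      have hvlow : Real.sqrt c ≤ ⨅ α, ‖M α v‖ := by
        refine le_ciInf fun α => ?_
        calc Real.sqrt c ≤ Real.sqrt (‖M α v‖^2) := by
              refine Real.sqrt_le_sqrt ?_
              rw [hv2 α]; exact hqval α
          _ = ‖M α v‖ := Real.sqrt_sq (norm_nonneg _)
      have hLlow : Real.sqrt c ≤ L := le_trans hvlow (le_ciSup hbddA ⟨v, hv1⟩)
      have : L < Real.sqrt c := by
        have h1 : L = Real.sqrt (L^2) := (Real.sqrt_sq hL0).symm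
        rw [h1]
        refine Real.sqrt_lt_sqrt (sq_nonneg _) ?_
        rw [hc]; linarith
      linarith
    exact le_trans hA hB
end

section
/- Let A₀, A₁, …, A_k ∈ ℂ^{n×n} be pairwise commuting normal matrices. Then there exists a unit vector v* ∈ ℂⁿ such that the infimum over all coefficients α₁, …, α_k ∈ ℂ of ‖A₀v* − Σ_{i=1}^k αᵢAᵢv*‖ equals the infimum over all α₁, …, α_k ∈ ℂ of ‖A₀ − Σ_{i=1}^k αᵢAᵢ‖; that is, the worst-case vector for the max-min problem is attained and achieves the min-max value. -/
set_option maxHeartbeats 1000000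
set_option synthInstance.maxHeartbeats 200000

open Module.End LinearMap Submodule InnerProductSpace

section NormalOps
variable {E : Type*} [NormedAddCommGroup E] [InnerProductSpace ℂ E] [FiniteDimensional ℂ E]

lemma aux_norm_adjoint_apply {N : E →ₗ[ℂ] E} (h : Commute N (star N)) (x : E) :
    ‖adjoint N x‖ = ‖N x‖ := by
  have hc : N (adjoint N x) = adjoint N (N x) := by
    have := congrFun (congrArg DFunLike.coe h) x
    simpa [Module.End.mul_apply, star_eq_adjoint] using this
  have h1 : ⟪adjoint N x, adjoint N x⟫_ℂ = ⟪N x, N x⟫_ℂ := by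
    rw [adjoint_inner_left, hc, adjoint_inner_right]
  rw [inner_self_eq_norm_sq_to_K (𝕜 := ℂ), inner_self_eq_norm_sq_to_K (𝕜 := ℂ)] at h1
  have h2 : ‖adjoint N x‖ ^ 2 = ‖N x‖ ^ 2 := by exact_mod_cast h1
  nlinarith [norm_nonneg (adjoint N x), norm_nonneg (N x)]

lemma aux_shift_normal {N : E →ₗ[ℂ] E} (h : Commute N (star N)) (μ : ℂ) :
    Commute (N - μ • 1) (star (N - μ • 1)) := by
  have hstar : star (N - μ • (1 : E →ₗ[ℂ] E)) = star N - (starRingEnd ℂ) μ • 1 := by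
    rw [star_sub, star_smul, star_one]; rfl
  rw [hstar]
  have d1 : Commute N (star N - (starRingEnd ℂ) μ • 1) :=
    h.sub_right ((Commute.one_right N).smul_right _)
  have d2 : Commute (μ • (1 : E →ₗ[ℂ] E)) (star N - (starRingEnd ℂ) μ • 1) :=
    (Commute.one_left _).smul_left _
  exact d1.sub_left d2

lemma aux_adjoint_eigen {N : E →ₗ[ℂ] E} (h : Commute N (star N)) {μ : ℂ} {x : E}
    (hx : N x = μ • x) : adjoint N x = (starRingEnd ℂ) μ • x := by
  have h2 := aux_norm_adjoint_apply (aux_shift_normal h μ) x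
  have h3 : (N - μ • 1) x = 0 := by
    simp [LinearMap.sub_apply, LinearMap.smul_apply, hx]
  rw [h3, norm_zero] at h2
  have h4 : adjoint (N - μ • (1 : E →ₗ[ℂ] E)) = adjoint N - (starRingEnd ℂ) μ • 1 := by
    rw [← star_eq_adjoint, ← star_eq_adjoint, star_sub, star_smul, star_one]; rfl
  have h5 : adjoint (N - μ • (1 : E →ₗ[ℂ] E)) x = 0 := norm_eq_zero.mp h2
  rw [h4] at h5
  simp only [LinearMap.sub_apply, LinearMap.smul_apply, Module.End.one_apply, sub_eq_zero] at h5
  exact h5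

lemma aux_iSup_eigenspace_normal {N : E →ₗ[ℂ] E} (h : Commute N (star N)) :
    ⨆ μ, eigenspace N μ = ⊤ := by
  set H : E →ₗ[ℂ] E := (2⁻¹ : ℂ) • (N + star N) with hH
  set K : E →ₗ[ℂ] E := (Complex.I * 2⁻¹) • (star N - N) with hK
  have hNHK : ∀ x : E, N x = H x + Complex.I • K x := by
    intro x
    rw [hH, hK]
    simp only [LinearMap.smul_apply, LinearMap.add_apply, LinearMap.sub_apply, smul_smul]
    have h1 : Complex.I * (Complex.I * 2⁻¹) = -2⁻¹ := by
      rw [← mul_assoc, Complex.I_mul_I]; ring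
    rw [h1]
    module
  have hHsym : H.IsSymmetric := by
    rw [LinearMap.isSymmetric_iff_isSelfAdjoint]
    rw [IsSelfAdjoint, star_smul, star_add, star_star]
    have : (star (2⁻¹ : ℂ)) = (2⁻¹ : ℂ) := by
      simp [Complex.ext_iff]
    rw [this, add_comm]
  have hKsym : K.IsSymmetric := by
    rw [LinearMap.isSymmetric_iff_isSelfAdjoint]
    rw [IsSelfAdjoint, star_smul, star_sub, star_star]
    have : (star (Complex.I * 2⁻¹)) = -(Complex.I * 2⁻¹) := by
      simp [Complex.ext_iff]
    rw [this, neg_smul, ← smul_neg, neg_sub]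
  have hHK : Commute H K := by
    have c1 : Commute N (star N - N) := h.sub_right (Commute.refl N)
    have c2 : Commute (star N) (star N - N) := (Commute.refl (star N)).sub_right h.symm
    exact ((c1.add_left c2).smul_left _).smul_right _
  have htop := LinearMap.IsSymmetric.iSup_iInf_eq_top_of_commute
    (T := ![H, K]) (fun i => by fin_cases i <;> assumption)
    (by intro i j hij; fin_cases i <;> fin_cases j <;> simp_all [Function.onFun, Commute.refl] <;>
      exact hHK.symm)
  rw [← top_le_iff, ← htop, iSup_le_iff]
  intro χ
  refine le_iSup_of_le (χ 0 + Complex.I * χ 1) ?_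
  intro x hx
  simp only [Submodule.mem_iInf] at hx
  have hx0 := hx 0
  have hx1 := hx 1
  rw [mem_eigenspace_iff] at hx0 hx1 ⊢
  simp only [Matrix.cons_val_zero, Matrix.cons_val_one, Matrix.head_cons] at hx0 hx1
  rw [hNHK x, hx0, hx1, smul_smul, add_smul]

/-- Fuglede's theorem (finite-dimensional): a map commuting with a normal map commutes
with its adjoint. -/
lemma aux_fuglede {N M : E →ₗ[ℂ] E} (h : Commute N (star N)) (hMN : Commute M N) :
    Commute M (star N) := by
  have htop := aux_iSup_eigenspace_normal h
  ext x
  have hx : x ∈ ⨆ μ, eigenspace N μ := htop ▸ Submodule.mem_top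
  simp only [Module.End.mul_apply]
  induction hx using Submodule.iSup_induction' with
  | mem μ x hx =>
      rw [mem_eigenspace_iff] at hx
      have h1 : star N x = (starRingEnd ℂ) μ • x := aux_adjoint_eigen h hx
      have h2 : N (M x) = μ • (M x) := by
        have := congrFun (congrArg DFunLike.coe hMN) x
        simp only [Module.End.mul_apply] at this
        rw [← this, hx, map_smul]
      have h3 : star N (M x) = (starRingEnd ℂ) μ • (M x) := aux_adjoint_eigen h h2
      rw [h1, h3, map_smul]
  | zero => simp
  | add y z _ _ hy hz => simp [map_add, hy, hz]


lemma aux_joint_eigenbasis {n k : ℕ} (hn : Module.finrank ℂ E = n)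
    (T : Fin (k+1) → E →ₗ[ℂ] E)
    (hnormal : ∀ i, Commute (T i) (star (T i)))
    (hcomm : ∀ i j, Commute (T i) (T j)) :
    ∃ (b : OrthonormalBasis (Fin n) ℂ E) (lam : Fin (k+1) → Fin n → ℂ),
      ∀ i j, T i (b j) = lam i j • b j := by
  classical
  have hF : ∀ i j, Commute (T i) (star (T j)) := fun i j =>
    aux_fuglede (hnormal j) (hcomm i j)
  have hFF : ∀ i j, Commute (star (T i)) (star (T j)) := by
    intro i j
    have := congrArg star (hcomm j i)
    rw [star_mul, star_mul] at this
    exact this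
  set H : Fin (k+1) → E →ₗ[ℂ] E := fun i => (2⁻¹ : ℂ) • (T i + star (T i)) with hHdef
  set K : Fin (k+1) → E →ₗ[ℂ] E := fun i => (Complex.I * 2⁻¹) • (star (T i) - T i) with hKdef
  have hTHK : ∀ i (x : E), T i x = H i x + Complex.I • K i x := by
    intro i x
    simp only [hHdef, hKdef, LinearMap.smul_apply, LinearMap.add_apply, LinearMap.sub_apply,
      smul_smul]
    have h1 : Complex.I * (Complex.I * 2⁻¹) = -2⁻¹ := by
      rw [← mul_assoc, Complex.I_mul_I]; ring
    rw [h1]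
    module
  have hHsym : ∀ i, (H i).IsSymmetric := by
    intro i
    rw [LinearMap.isSymmetric_iff_isSelfAdjoint]
    rw [IsSelfAdjoint, star_smul, star_add, star_star]
    have : (star (2⁻¹ : ℂ)) = (2⁻¹ : ℂ) := by simp [Complex.ext_iff]
    rw [this, add_comm]
  have hKsym : ∀ i, (K i).IsSymmetric := by
    intro i
    rw [LinearMap.isSymmetric_iff_isSelfAdjoint]
    rw [IsSelfAdjoint, star_smul, star_sub, star_star]
    have : (star (Complex.I * 2⁻¹)) = -(Complex.I * 2⁻¹) := by simp [Complex.ext_iff]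
    rw [this, neg_smul, ← smul_neg, neg_sub]
  set S : Fin (k+1) × Bool → E →ₗ[ℂ] E := fun p => cond p.2 (K p.1) (H p.1) with hSdef
  have hSsym : ∀ p, (S p).IsSymmetric := by
    rintro ⟨i, (_|_)⟩
    · exact hHsym i
    · exact hKsym i
  have hScomm : ∀ p q, Commute (S p) (S q) := by
    rintro ⟨i, bi⟩ ⟨j, bj⟩
    have a1 := hcomm i j
    have a2 := hF i j
    have a3 := (hF j i).symm
    have a4 := hFF i j
    cases bi <;> cases bj
    · exact (((a1.add_right a2).add_left (a3.add_right a4)).smul_left _).smul_right _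
    · exact (((a2.sub_right a1).add_left (a4.sub_right a3)).smul_left _).smul_right _
    · exact (((a3.add_right a4).sub_left (a1.add_right a2)).smul_left _).smul_right _
    · exact (((a4.sub_right a3).sub_left (a2.sub_right a1)).smul_left _).smul_right _
  have htop := LinearMap.IsSymmetric.iSup_iInf_eq_top_of_commute (T := S) hSsym
    (fun p q _ => hScomm p q)
  set W : (Fin (k+1) → ℂ) → Submodule ℂ E := fun χ => ⨅ i, eigenspace (T i) (χ i) with hWdef
  have hWtop : ⨆ χ, W χ = ⊤ := by
    rw [← top_le_iff, ← htop, iSup_le_iff]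
    intro χ'
    refine le_iSup_of_le (fun i => χ' (i, false) + Complex.I * χ' (i, true)) (le_iInf ?_)
    intro i x hx
    simp only [Submodule.mem_iInf] at hx
    have hx0 := hx (i, false)
    have hx1 := hx (i, true)
    rw [mem_eigenspace_iff] at hx0 hx1 ⊢
    simp only [hSdef, cond_false, cond_true] at hx0 hx1
    rw [hTHK i x, hx0, hx1, smul_smul, add_smul]
  have hWorth : OrthogonalFamily ℂ (fun χ => W χ) (fun χ => (W χ).subtypeₗᵢ) := by
    intro χ χ' hne v w
    obtain ⟨i, hi⟩ := Function.ne_iff.mp hne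
    have hv : T i (v : E) = χ i • (v : E) := by
      have := (Submodule.mem_iInf _).mp v.2 i
      rwa [mem_eigenspace_iff] at this
    have hw : T i (w : E) = χ' i • (w : E) := by
      have := (Submodule.mem_iInf _).mp w.2 i
      rwa [mem_eigenspace_iff] at this
    have h1 : ⟪T i (v : E), (w : E)⟫_ℂ = ⟪(v : E), adjoint (T i) (w : E)⟫_ℂ :=
      (adjoint_inner_right _ _ _).symm
    rw [hv, aux_adjoint_eigen (hnormal i) hw, inner_smul_left, inner_smul_right] at h1
    have h2 : ((starRingEnd ℂ) (χ i) - (starRingEnd ℂ) (χ' i)) * ⟪(v : E), (w : E)⟫_ℂ = 0 := by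
      rw [sub_mul, h1]; ring
    have h3 : (starRingEnd ℂ) (χ i) - (starRingEnd ℂ) (χ' i) ≠ 0 := by
      rw [sub_ne_zero]
      exact fun hc => hi ((starRingEnd ℂ).injective hc)
    simpa [Submodule.coe_subtypeₗᵢ] using (mul_eq_zero.mp h2).resolve_left h3
  have hInd := hWorth.independent
  have hInt : DirectSum.IsInternal W :=
    DirectSum.isInternal_submodule_of_iSupIndep_of_iSup_eq_top hInd hWtop
  haveI : Fintype {χ // W χ ≠ ⊥} := hInd.fintypeNeBotOfFiniteDimensional
  have hInt' : DirectSum.IsInternal (fun χ : {χ // W χ ≠ ⊥} => W χ.1) :=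
    DirectSum.isInternal_ne_bot_iff.mpr hInt
  have hWorth' : OrthogonalFamily ℂ (fun χ : {χ // W χ ≠ ⊥} => W χ.1)
      (fun χ : {χ // W χ ≠ ⊥} => (W χ.1).subtypeₗᵢ) :=
    hWorth.comp Subtype.val_injective
  refine ⟨hInt'.subordinateOrthonormalBasis hn hWorth',
    fun i j => ((hInt'.subordinateOrthonormalBasisIndex hn j hWorth') : {χ // W χ ≠ ⊥}).1 i,
    fun i j => ?_⟩
  have hmem := hInt'.subordinateOrthonormalBasis_subordinate hn j hWorth'
  have := (Submodule.mem_iInf _).mp hmem i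
  rwa [mem_eigenspace_iff] at this


lemma aux_opnorm_diag {n : ℕ} (b : OrthonormalBasis (Fin n) ℂ E) (f : E →L[ℂ] E)
    (μ : Fin n → ℂ) (hf : ∀ j, f (b j) = μ j • b j) : ‖f‖ = ‖μ‖ := by
  have key : ∀ v : E, f v = b.repr.symm (WithLp.toLp 2 (fun j => μ j * b.repr v j)) := by
    intro v
    conv_lhs => rw [← b.sum_repr v]
    rw [map_sum, ← OrthonormalBasis.sum_repr_symm]
    refine Finset.sum_congr rfl fun j _ => ?_
    rw [map_smul, hf j, smul_smul, mul_comm]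
  apply le_antisymm
  · refine f.opNorm_le_bound (norm_nonneg μ) fun v => ?_
    have hv : ‖v‖ = Real.sqrt (∑ j, ‖b.repr v j‖ ^ 2) := by
      rw [← b.repr.norm_map v, EuclideanSpace.norm_eq]
    rw [key v, LinearIsometryEquiv.norm_map, EuclideanSpace.norm_eq]
    calc Real.sqrt (∑ j, ‖μ j * b.repr v j‖ ^ 2)
        ≤ Real.sqrt (∑ j, ‖μ‖ ^ 2 * ‖b.repr v j‖ ^ 2) := by
          apply Real.sqrt_le_sqrt
          apply Finset.sum_le_sum
          intro j _
          rw [norm_mul]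
          have h1 : ‖μ j‖ ≤ ‖μ‖ := norm_le_pi_norm μ j
          rw [mul_pow]
          exact mul_le_mul_of_nonneg_right (pow_le_pow_left₀ (norm_nonneg _) h1 2)
            (by positivity)
      _ = ‖μ‖ * Real.sqrt (∑ j, ‖b.repr v j‖ ^ 2) := by
          rw [← Finset.mul_sum, Real.sqrt_mul (by positivity), Real.sqrt_sq (norm_nonneg μ)]
      _ = ‖μ‖ * ‖v‖ := by rw [← hv]
  · have hb : ∀ j, ‖μ j‖ ≤ ‖f‖ := by
      intro j
      have h1 : ‖f (b j)‖ ≤ ‖f‖ * ‖b j‖ := f.le_opNorm _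
      rw [hf j, norm_smul, b.orthonormal.1 j, mul_one] at h1
      simpa using h1
    exact (pi_norm_le_iff_of_nonneg (norm_nonneg f)).mpr hb

end NormalOps



open Matrix

/-- For pairwise commuting normal complex matrices, the worst-case vector of the
max-min problem is attained and achieves the min-max value. -/
theorem exists_worst_case_vector_commuting_normal_complex
    (n k : ℕ) (hn : 0 < n) (A : Fin (k + 1) → Matrix (Fin n) (Fin n) ℂ)
    (hnormal : ∀ i, (A i)ᴴ * A i = A i * (A i)ᴴ)
    (hcomm : ∀ i j, A i * A j = A j * A i) :
    ∃ vstar : EuclideanSpace ℂ (Fin n), ‖vstar‖ = 1 ∧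
      (⨅ α : Fin k → ℂ,
        ‖Matrix.toEuclideanCLM (𝕜 := ℂ) (A 0) vstar
          - ∑ i : Fin k, α i • Matrix.toEuclideanCLM (𝕜 := ℂ) (A i.succ) vstar‖)
      = ⨅ α : Fin k → ℂ,
          ‖Matrix.toEuclideanCLM (𝕜 := ℂ) (A 0 - ∑ i : Fin k, α i • A i.succ)‖ := by
  classical
  set E' := EuclideanSpace ℂ (Fin n) with hE'
  set Φ : Matrix (Fin n) (Fin n) ℂ ≃⋆ₐ[ℂ] (E' →L[ℂ] E') :=
    Matrix.toEuclideanCLM (n := Fin n) (𝕜 := ℂ) with hΦ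
  set T : Fin (k+1) → (E' →ₗ[ℂ] E') := fun i => Matrix.toEuclideanLin (A i) with hT
  have hcoe : ∀ M : Matrix (Fin n) (Fin n) ℂ, (Φ M : E' →ₗ[ℂ] E') = Matrix.toEuclideanLin M :=
    fun M => rfl
  have hmulT : ∀ M N : Matrix (Fin n) (Fin n) ℂ,
      Matrix.toEuclideanLin (M * N) = Matrix.toEuclideanLin M * Matrix.toEuclideanLin N := by
    intro M N
    rw [← hcoe, ← hcoe, ← hcoe, _root_.map_mul]
    rfl
  have hstarT : ∀ i, star (T i) = Matrix.toEuclideanLin ((A i)ᴴ) := by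
    intro i
    rw [LinearMap.star_eq_adjoint, hT, Matrix.toEuclideanLin_conjTranspose_eq_adjoint]
  have hnormalT : ∀ i, Commute (T i) (star (T i)) := by
    intro i
    rw [Commute, SemiconjBy, hstarT, hT]
    rw [← hmulT, ← hmulT, hnormal i]
  have hcommT : ∀ i j, Commute (T i) (T j) := by
    intro i j
    rw [Commute, SemiconjBy, hT, ← hmulT, ← hmulT, hcomm i j]
  obtain ⟨b, lam, hblam⟩ := aux_joint_eigenbasis (finrank_euclideanSpace_fin) T hnormalT hcommT
  -- scalar data
  set u : Fin n → ℂ := fun j => lam 0 j with hu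
  set g : Fin k → (Fin n → ℂ) := fun i => fun j => lam i.succ j with hg
  set fv : (Fin k → ℂ) → (Fin n → ℂ) := fun α => u - ∑ i, α i • g i with hfv
  have hfvj : ∀ α j, fv α j = lam 0 j - ∑ i, α i * lam i.succ j := by
    intro α j
    simp [hfv, hu, hg, Finset.sum_apply]
  have heigA : ∀ (i : Fin (k+1)) (j : Fin n), Φ (A i) (b j) = lam i j • b j := by
    intro i j
    exact hblam i j
  have heig : ∀ (α : Fin k → ℂ) (j : Fin n),
      Φ (A 0 - ∑ i, α i • A i.succ) (b j) = (fv α j) • b j := by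
    intro α j
    rw [_root_.map_sub, _root_.map_sum]
    rw [ContinuousLinearMap.sub_apply, ContinuousLinearMap.sum_apply]
    have hterm : ∀ i : Fin k, (Φ (α i • A i.succ)) (b j) = (α i * lam i.succ j) • b j := by
      intro i
      rw [_root_.map_smul, ContinuousLinearMap.smul_apply, heigA, smul_smul]
    rw [Finset.sum_congr rfl (fun i _ => hterm i), heigA, ← Finset.sum_smul, hfvj α j, sub_smul]
  have hnormB : ∀ α : Fin k → ℂ, ‖Φ (A 0 - ∑ i, α i • A i.succ)‖ = ‖fv α‖ :=
    fun α => aux_opnorm_diag b _ (fv α) (heig α)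
  -- the min-max value
  set c : ℝ := ⨅ α : Fin k → ℂ, ‖Φ (A 0 - ∑ i : Fin k, α i • A i.succ)‖ with hc
  have hbdd : BddBelow (Set.range fun α : Fin k → ℂ =>
      ‖Φ (A 0 - ∑ i : Fin k, α i • A i.succ)‖) := ⟨0, by rintro x ⟨α, rfl⟩; positivity⟩
  have hc0 : 0 ≤ c := le_ciInf fun α => norm_nonneg _
  have hceq : c = ⨅ α : Fin k → ℂ, ‖fv α‖ := by
    rw [hc]; exact iInf_congr hnormB
  have hbdd2 : BddBelow (Set.range fun α : Fin k → ℂ => ‖fv α‖) :=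
    ⟨0, by rintro x ⟨α, rfl⟩; positivity⟩
  have hcle : ∀ α, c ≤ ‖fv α‖ := by
    intro α; rw [hceq]; exact ciInf_le hbdd2 α
  -- key existence
  have hkey : ∃ v : E', ‖v‖ = 1 ∧ ∀ α : Fin k → ℂ,
      c ≤ ‖Φ (A 0 - ∑ i, α i • A i.succ) v‖ := by
    rcases eq_or_lt_of_le hc0 with hczero | hcpos
    · exact ⟨b ⟨0, hn⟩, b.orthonormal.1 _, fun α => by rw [← hczero]; positivity⟩
    · -- duality case
      set V : Submodule ℂ (Fin n → ℂ) := Submodule.span ℂ (Set.range g) with hV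
      have hfvapp : ∀ α : Fin k → ℂ, fv α = u - ∑ i, α i • g i := fun α => rfl
      haveI : IsClosed (V : Set (Fin n → ℂ)) := Submodule.closed_of_finiteDimensional V
      have hmemV : ∀ α : Fin k → ℂ, (∑ i, α i • g i) ∈ V := fun α =>
        Submodule.sum_smul_mem V α (fun i _ => Submodule.subset_span ⟨i, rfl⟩)
      have hqle : ∀ α : Fin k → ℂ, ‖(Submodule.Quotient.mk u : (Fin n → ℂ) ⧸ V)‖ ≤ ‖fv α‖ := by
        intro α
        have h1 : (Submodule.Quotient.mk u : (Fin n → ℂ) ⧸ V) = Submodule.Quotient.mk (fv α) := by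
          rw [Submodule.Quotient.eq]
          have h2 : u - fv α = ∑ i, α i • g i := by rw [hfvapp]; abel
          rw [h2]
          exact hmemV α
        rw [h1]
        exact Submodule.Quotient.norm_mk_le V (fv α)
      have hqge : c ≤ ‖(Submodule.Quotient.mk u : (Fin n → ℂ) ⧸ V)‖ := by
        refine le_of_forall_pos_le_add fun ε hε => ?_
        obtain ⟨m, hm, hmlt⟩ := Submodule.Quotient.norm_mk_lt
          (Submodule.Quotient.mk u : (Fin n → ℂ) ⧸ V) hε
        have humV : u - m ∈ V := by
          rw [← Submodule.Quotient.eq]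
          exact hm.symm
        obtain ⟨α, hα⟩ := (mem_span_range_iff_exists_fun ℂ).mp humV
        have hfm : fv α = m := by
          rw [hfvapp, hα]
          abel
        calc c ≤ ‖fv α‖ := hcle α
          _ = ‖m‖ := by rw [hfm]
          _ ≤ ‖(Submodule.Quotient.mk u : (Fin n → ℂ) ⧸ V)‖ + ε := le_of_lt hmlt
      have hne : (Submodule.Quotient.mk u : (Fin n → ℂ) ⧸ V) ≠ 0 := by
        intro h0
        rw [h0, norm_zero] at hqge
        linarith
      obtain ⟨G, hG1, hGu⟩ := exists_dual_vector ℂ (Submodule.Quotient.mk u : (Fin n → ℂ) ⧸ V) (norm_ne_zero_iff.mpr hne)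
      set φ : (Fin n → ℂ) →ₗ[ℂ] ℂ := G.toLinearMap ∘ₗ V.mkQ with hφdef
      have hφapp : ∀ x : Fin n → ℂ, φ x = G (Submodule.Quotient.mk x) := fun x => rfl
      have hφbound : ∀ x : Fin n → ℂ, ‖φ x‖ ≤ ‖x‖ := by
        intro x
        rw [hφapp]
        calc ‖G (Submodule.Quotient.mk x : (Fin n → ℂ) ⧸ V)‖
            ≤ ‖G‖ * ‖(Submodule.Quotient.mk x : (Fin n → ℂ) ⧸ V)‖ := G.le_opNorm _
          _ = ‖(Submodule.Quotient.mk x : (Fin n → ℂ) ⧸ V)‖ := by rw [hG1, one_mul]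
          _ ≤ ‖x‖ := Submodule.Quotient.norm_mk_le V x
      set cq : ℝ := ‖(Submodule.Quotient.mk u : (Fin n → ℂ) ⧸ V)‖ with hcq
      have hφV : ∀ y ∈ V, φ y = 0 := by
        intro y hy
        rw [hφapp, (Submodule.Quotient.mk_eq_zero V).mpr hy, _root_.map_zero]
      have hφu : φ u = (cq : ℂ) := hGu
      have hφfv : ∀ α : Fin k → ℂ, φ (fv α) = (cq : ℂ) := by
        intro α
        rw [hfvapp, _root_.map_sub, hφu, hφV _ (hmemV α), sub_zero]
      set μ : Fin n → ℂ := fun j => φ (Pi.single j 1) with hμ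
      have hφeq : ∀ x : Fin n → ℂ, φ x = ∑ j, x j * μ j := by
        intro x
        conv_lhs => rw [← Finset.univ_sum_single x]
        rw [_root_.map_sum]
        refine Finset.sum_congr rfl fun j _ => ?_
        have h1 : (Pi.single j (x j) : Fin n → ℂ) = x j • (Pi.single j (1 : ℂ) : Fin n → ℂ) := by
          rw [← Pi.single_smul, smul_eq_mul, mul_one]
        rw [h1, _root_.map_smul, smul_eq_mul, hμ]
      set s : ℝ := ∑ j, ‖μ j‖ with hs
      have hs0 : 0 ≤ s := Finset.sum_nonneg fun j _ => norm_nonneg _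
      have hs1 : s ≤ 1 := by
        set σ : Fin n → ℂ := fun j => if μ j = 0 then 0 else (starRingEnd ℂ) (μ j) / ‖μ j‖ with hσ
        have hσle : ‖σ‖ ≤ 1 := by
          refine (pi_norm_le_iff_of_nonneg zero_le_one).mpr fun j => ?_
          by_cases h : μ j = 0
          · simp [hσ, h]
          · simp only [hσ, if_neg h]
            rw [norm_div, RCLike.norm_conj, Complex.norm_real, norm_norm,
              div_self (norm_ne_zero_iff.mpr h)]
        have hφσ : φ σ = (s : ℂ) := by
          rw [hφeq, hs]
          push_cast
          refine Finset.sum_congr rfl fun j _ => ?_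
          by_cases h : μ j = 0
          · simp [hσ, h]
          · simp only [hσ, if_neg h]
            rw [div_mul_eq_mul_div, Complex.conj_mul', sq, mul_div_assoc,
              div_self (Complex.ofReal_ne_zero.mpr (norm_ne_zero_iff.mpr h)), mul_one]
        have hb := hφbound σ
        rw [hφσ, Complex.norm_real, Real.norm_of_nonneg hs0] at hb
        exact le_trans hb hσle
      have hnpos : (0:ℝ) < n := Nat.cast_pos.mpr hn
      set w : Fin n → ℝ := fun j => ‖μ j‖ + (1 - s)/n with hw
      have hw0 : ∀ j, 0 ≤ w j := fun j =>
        add_nonneg (norm_nonneg _) (div_nonneg (by linarith) hnpos.le)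
      have hwge : ∀ j, ‖μ j‖ ≤ w j := fun j =>
        le_add_of_nonneg_right (div_nonneg (by linarith) hnpos.le)
      have hwsum : ∑ j, w j = 1 := by
        rw [hw]
        rw [Finset.sum_add_distrib, Finset.sum_const, Finset.card_univ, Fintype.card_fin,
          nsmul_eq_mul, ← hs]
        field_simp
        ring
      set y : E' := b.repr.symm (WithLp.toLp 2 (fun j => (Real.sqrt (w j) : ℂ))) with hy
      have hynorm : ‖y‖ = 1 := by
        rw [hy, LinearIsometryEquiv.norm_map, EuclideanSpace.norm_eq]
        have hterm : ∀ j : Fin n, ‖((Real.sqrt (w j) : ℝ) : ℂ)‖ ^ 2 = w j := by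
          intro j
          rw [Complex.norm_real, Real.norm_of_nonneg (Real.sqrt_nonneg _), Real.sq_sqrt (hw0 j)]
        rw [Finset.sum_congr rfl fun j _ => hterm j, hwsum, Real.sqrt_one]
      refine ⟨y, hynorm, fun α => ?_⟩
      have h1 : y = ∑ j, ((Real.sqrt (w j) : ℂ)) • b j := (b.sum_repr_symm (WithLp.toLp 2 (fun j => (Real.sqrt (w j) : ℂ)))).symm
      have hBy : Φ (A 0 - ∑ i, α i • A i.succ) y
          = b.repr.symm (WithLp.toLp 2 (fun j => fv α j * (Real.sqrt (w j) : ℂ))) := by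
        rw [h1, _root_.map_sum, ← OrthonormalBasis.sum_repr_symm]
        refine Finset.sum_congr rfl fun j _ => ?_
        rw [_root_.map_smul, heig α j, smul_smul, mul_comm]
      have hnormy : ‖Φ (A 0 - ∑ i, α i • A i.succ) y‖
          = Real.sqrt (∑ j, w j * ‖fv α j‖ ^ 2) := by
        rw [hBy, LinearIsometryEquiv.norm_map, EuclideanSpace.norm_eq]
        congr 1
        refine Finset.sum_congr rfl fun j _ => ?_
        rw [norm_mul, Complex.norm_real, Real.norm_of_nonneg (Real.sqrt_nonneg _), mul_pow,
          Real.sq_sqrt (hw0 j)]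
        ring
      have hcfv : c ≤ ∑ j, w j * ‖fv α j‖ := by
        have h2 : ‖φ (fv α)‖ = cq := by
          rw [hφfv α, Complex.norm_real, Real.norm_of_nonneg (hcpos.le.trans hqge)]
        have h3 : ‖φ (fv α)‖ ≤ ∑ j, w j * ‖fv α j‖ := by
          rw [hφeq]
          refine (norm_sum_le _ _).trans (Finset.sum_le_sum fun j _ => ?_)
          rw [norm_mul]
          calc ‖fv α j‖ * ‖μ j‖ ≤ ‖fv α j‖ * w j :=
              mul_le_mul_of_nonneg_left (hwge j) (norm_nonneg _)
            _ = w j * ‖fv α j‖ := mul_comm _ _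
        calc c ≤ cq := hqge
          _ = ‖φ (fv α)‖ := h2.symm
          _ ≤ _ := h3
      have hCS : (∑ j, w j * ‖fv α j‖) ≤ Real.sqrt (∑ j, w j * ‖fv α j‖ ^ 2) := by
        rw [Real.le_sqrt (Finset.sum_nonneg fun j _ => mul_nonneg (hw0 j) (norm_nonneg _))]
        have hcs := Finset.sum_mul_sq_le_sq_mul_sq Finset.univ (fun j => Real.sqrt (w j))
          (fun j => Real.sqrt (w j) * ‖fv α j‖)
        have e1 : ∀ j : Fin n, Real.sqrt (w j) * (Real.sqrt (w j) * ‖fv α j‖)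
            = w j * ‖fv α j‖ := fun j => by
          rw [← mul_assoc, Real.mul_self_sqrt (hw0 j)]
        have e2 : ∀ j : Fin n, (Real.sqrt (w j))^2 = w j := fun j => Real.sq_sqrt (hw0 j)
        have e3 : ∀ j : Fin n, (Real.sqrt (w j) * ‖fv α j‖)^2 = w j * ‖fv α j‖^2 := fun j => by
          rw [mul_pow, Real.sq_sqrt (hw0 j)]
        rw [Finset.sum_congr rfl fun j _ => e1 j, Finset.sum_congr rfl fun j _ => e2 j,
          Finset.sum_congr rfl fun j _ => e3 j, hwsum, one_mul] at hcs
        exact hcs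
        exact Finset.sum_nonneg fun j _ => mul_nonneg (hw0 j) (sq_nonneg _)
      rw [hnormy]
      exact hcfv.trans hCS
  obtain ⟨vstar, hv1, hvge⟩ := hkey
  refine ⟨vstar, hv1, ?_⟩
  have hrw : ∀ α : Fin k → ℂ, Φ (A 0) vstar - ∑ i, α i • Φ (A i.succ) vstar
      = Φ (A 0 - ∑ i, α i • A i.succ) vstar := by
    intro α
    rw [_root_.map_sub, _root_.map_sum, ContinuousLinearMap.sub_apply, ContinuousLinearMap.sum_apply]
    congr 1
    refine Finset.sum_congr rfl fun i _ => ?_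
    rw [_root_.map_smul, ContinuousLinearMap.smul_apply]
  have hfun : (fun α : Fin k → ℂ => ‖Φ (A 0) vstar - ∑ i, α i • Φ (A i.succ) vstar‖)
      = fun α : Fin k → ℂ => ‖Φ (A 0 - ∑ i, α i • A i.succ) vstar‖ := by
    funext α; rw [hrw α]
  show (⨅ α : Fin k → ℂ, ‖Φ (A 0) vstar - ∑ i, α i • Φ (A i.succ) vstar‖) = c
  rw [hfun]
  apply le_antisymm
  · apply ciInf_mono ⟨0, by rintro x ⟨α, rfl⟩; positivity⟩
    intro α
    have := (Φ (A 0 - ∑ i, α i • A i.succ)).le_opNorm vstar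
    rwa [hv1, mul_one] at this
  · exact le_ciInf hvge
end

section
/- Let Γ ⊂ ℂ be a finite nonempty set, let f, φ₁, …, φ_k : ℂ → ℂ be functions, and let p* = Σ_{i=1}^k αᵢφᵢ with α₁, …, α_k ∈ ℂ. Suppose there exist ℓ points μ₁, …, μ_ℓ ∈ Γ with |f(μⱼ) − p*(μⱼ)| = max_{z∈Γ} |f(z) − p*(z)| for each j, and positive real numbers ω₁, …, ω_ℓ with ω₁ + ⋯ + ω_ℓ = 1, such that Σ_{j=1}^ℓ ωⱼ (f(μⱼ) − p*(μⱼ)) · conj(p(μⱼ)) = 0 for every p in the complex linear span of φ₁, …, φ_k. Then p* is a polynomial of best approximation for f on Γ, i.e., max_{z∈Γ} |f(z) − p*(z)| = min over all q in the complex linear span of φ₁, …, φ_k of max_{z∈Γ} |f(z) − q(z)|. -/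
/-- Sufficiency part of the Rivlin–Shapiro characterization of best approximation
on a finite set in the complex plane. -/
theorem best_approx_of_orthogonality_condition
    (k : ℕ) (Γ : Finset ℂ) (hΓ : Γ.Nonempty)
    (f : ℂ → ℂ) (φ : Fin k → ℂ → ℂ) (α : Fin k → ℂ)
    (pstar : ℂ → ℂ) (hpstar : pstar = fun z => ∑ i : Fin k, α i * φ i z)
    (ℓ : ℕ) (μ : Fin ℓ → ℂ) (hμΓ : ∀ j, μ j ∈ Γ)
    (hext : ∀ j, ‖f (μ j) - pstar (μ j)‖ =
      Γ.sup' hΓ fun z => ‖f z - pstar z‖)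
    (ω : Fin ℓ → ℝ) (hωpos : ∀ j, 0 < ω j) (hωsum : ∑ j, ω j = 1)
    (horth : ∀ β : Fin k → ℂ,
      ∑ j, (ω j : ℂ) * (f (μ j) - pstar (μ j)) *
        (starRingEnd ℂ) (∑ i : Fin k, β i * φ i (μ j)) = 0) :
    ∀ β : Fin k → ℂ,
      (Γ.sup' hΓ fun z => ‖f z - pstar z‖) ≤
        Γ.sup' hΓ fun z => ‖f z - ∑ i : Fin k, β i * φ i z‖ := by
  intro β
  set E : ℝ := Γ.sup' hΓ fun z => ‖f z - pstar z‖ with hE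
  set M : ℝ := Γ.sup' hΓ fun z => ‖f z - ∑ i : Fin k, β i * φ i z‖ with hM
  have hEnn : 0 ≤ E := by
    obtain ⟨z, hz⟩ := hΓ
    exact le_trans (norm_nonneg (f z - pstar z))
      (Finset.le_sup' (fun z => ‖f z - pstar z‖) hz)
  have hMnn : 0 ≤ M := by
    obtain ⟨z, hz⟩ := hΓ
    exact le_trans (norm_nonneg (f z - ∑ i : Fin k, β i * φ i z))
      (Finset.le_sup' (fun z => ‖f z - ∑ i : Fin k, β i * φ i z‖) hz)
  -- key identity
  have key : ((E : ℂ))^2 =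
      ∑ j, (ω j : ℂ) * (f (μ j) - pstar (μ j)) *
        (starRingEnd ℂ) (f (μ j) - ∑ i : Fin k, β i * φ i (μ j)) := by
    have hsplit : ∀ j : Fin ℓ,
        (ω j : ℂ) * (f (μ j) - pstar (μ j)) *
          (starRingEnd ℂ) (f (μ j) - ∑ i : Fin k, β i * φ i (μ j)) =
        (ω j : ℂ) * (f (μ j) - pstar (μ j)) *
          (starRingEnd ℂ) (f (μ j) - pstar (μ j)) +
        (ω j : ℂ) * (f (μ j) - pstar (μ j)) *
          (starRingEnd ℂ) (∑ i : Fin k, (α i - β i) * φ i (μ j)) := by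
      intro j
      have : f (μ j) - ∑ i : Fin k, β i * φ i (μ j) =
          (f (μ j) - pstar (μ j)) + ∑ i : Fin k, (α i - β i) * φ i (μ j) := by
        rw [hpstar]; simp [sub_mul, Finset.sum_sub_distrib]
      rw [this, map_add]; ring
    rw [Finset.sum_congr rfl (fun j _ => hsplit j), Finset.sum_add_distrib,
      horth (fun i => α i - β i), add_zero]
    have habs : ∀ j : Fin ℓ,
        (ω j : ℂ) * (f (μ j) - pstar (μ j)) *
          (starRingEnd ℂ) (f (μ j) - pstar (μ j)) = (ω j : ℂ) * (E : ℂ)^2 := by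
      intro j
      rw [mul_assoc, Complex.mul_conj]
      congr 1
      rw [Complex.normSq_eq_norm_sq, hext j]
      push_cast
      rfl
    rw [Finset.sum_congr rfl (fun j _ => habs j), ← Finset.sum_mul,
      ← Complex.ofReal_sum, hωsum]
    simp
  -- bound
  have hbound : E^2 ≤ E * M := by
    have h1 : E^2 = ‖((E : ℂ))^2‖ := by
      rw [norm_pow, Complex.norm_real, Real.norm_eq_abs, abs_of_nonneg hEnn]
    rw [h1, key]
    calc ‖∑ j, (ω j : ℂ) * (f (μ j) - pstar (μ j)) *
        (starRingEnd ℂ) (f (μ j) - ∑ i : Fin k, β i * φ i (μ j))‖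
        ≤ ∑ j, ‖(ω j : ℂ) * (f (μ j) - pstar (μ j)) *
          (starRingEnd ℂ) (f (μ j) - ∑ i : Fin k, β i * φ i (μ j))‖ :=
          norm_sum_le _ _
      _ ≤ ∑ j : Fin ℓ, ω j * (E * M) := by
          apply Finset.sum_le_sum
          intro j _
          rw [norm_mul, norm_mul, Complex.norm_real, Real.norm_eq_abs, Complex.norm_conj,
            abs_of_nonneg (hωpos j).le, hext j]
          rw [mul_assoc]
          apply mul_le_mul_of_nonneg_left _ (hωpos j).le
          exact mul_le_mul_of_nonneg_left
            (Finset.le_sup' (fun z => ‖f z - ∑ i : Fin k, β i * φ i z‖) (hμΓ j)) hEnn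
      _ = E * M := by rw [← Finset.sum_mul, hωsum, one_mul]
  rcases eq_or_lt_of_le hEnn with h | h
  · rw [← h]; exact hMnn
  · nlinarith [hbound, h]
end

section
/- Let Γ ⊂ ℂ be a finite nonempty set, let f, φ₁, …, φ_k : ℂ → ℂ be functions, and suppose p* in the complex linear span of φ₁, …, φ_k is a polynomial of best approximation for f on Γ. Then there exist an integer ℓ with 1 ≤ ℓ ≤ 2k + 1, pairwise distinct points μ₁, …, μ_ℓ ∈ Γ satisfying |f(μⱼ) − p*(μⱼ)| = max_{z∈Γ} |f(z) − p*(z)| for each j, and positive real numbers ω₁, …, ω_ℓ with ω₁ + ⋯ + ω_ℓ = 1, such that Σ_{j=1}^ℓ ωⱼ (f(μⱼ) − p*(μⱼ)) · conj(p(μⱼ)) = 0 for every p in the complex linear span of φ₁, …, φ_k. -/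
open Finset Complex

/-- Necessity part of the Rivlin–Shapiro characterization of best approximation
on a finite set in the complex plane. -/
theorem orthogonality_condition_of_best_approx
    (k : ℕ) (Γ : Finset ℂ) (hΓ : Γ.Nonempty)
    (f : ℂ → ℂ) (φ : Fin k → ℂ → ℂ) (α : Fin k → ℂ)
    (pstar : ℂ → ℂ) (hpstar : pstar = fun z => ∑ i : Fin k, α i * φ i z)
    (hbest : ∀ β : Fin k → ℂ,
      (Γ.sup' hΓ fun z => ‖f z - pstar z‖) ≤
        Γ.sup' hΓ fun z => ‖f z - ∑ i : Fin k, β i * φ i z‖) :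
    ∃ ℓ : ℕ, 1 ≤ ℓ ∧ ℓ ≤ 2 * k + 1 ∧
      ∃ μ : Fin ℓ → ℂ, Function.Injective μ ∧ (∀ j, μ j ∈ Γ) ∧
        (∀ j, ‖f (μ j) - pstar (μ j)‖ =
          Γ.sup' hΓ fun z => ‖f z - pstar z‖) ∧
        ∃ ω : Fin ℓ → ℝ, (∀ j, 0 < ω j) ∧ (∑ j, ω j = 1) ∧
          ∀ β : Fin k → ℂ,
            ∑ j, (ω j : ℂ) * (f (μ j) - pstar (μ j)) *
              (starRingEnd ℂ) (∑ i : Fin k, β i * φ i (μ j)) = 0 := by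
  classical
  set M := Γ.sup' hΓ fun z => norm (f z - pstar z) with hMdef
  set c : ℂ → (Fin k → ℂ) :=
    fun z i => (f z - pstar z) * (starRingEnd ℂ) (φ i z) with hcdef
  set E : Finset ℂ := Γ.filter (fun z => norm (f z - pstar z) = M) with hEdef
  obtain ⟨z₀, hz₀Γ, hz₀⟩ := Finset.exists_mem_eq_sup' hΓ fun z => norm (f z - pstar z)
  have hz₀E : z₀ ∈ E := Finset.mem_filter.2 ⟨hz₀Γ, hz₀.symm⟩
  have hMnn : 0 ≤ M := by rw [hMdef, hz₀]; exact norm_nonneg _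
  -- Main claim: 0 lies in the convex hull of the extremal "error vectors".
  have h0 : (0 : Fin k → ℂ) ∈ convexHull ℝ (c '' ↑E) := by
    by_contra h0
    -- first: M > 0
    have hM0 : 0 < M := by
      rcases hMnn.lt_or_eq with h | h
      · exact h
      · exfalso
        apply h0
        apply subset_convexHull
        refine ⟨z₀, by simpa using hz₀E, ?_⟩
        have : f z₀ - pstar z₀ = 0 := by
          have h7 : norm (f z₀ - pstar z₀) = 0 := by rw [← hz₀, ← hMdef, ← h]
          rwa [norm_eq_zero] at h7
        funext i
        simp [hcdef, this]
    have hclosed : IsClosed (convexHull ℝ (c '' ↑E)) :=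
      (Set.Finite.isCompact_convexHull ℝ ((E.finite_toSet).image c)).isClosed
    obtain ⟨L, u, hLu, hu0⟩ :=
      geometric_hahn_banach_closed_point (convex_convexHull ℝ _) hclosed h0
    rw [map_zero] at hu0
    set δ : ℝ := -u with hδdef
    have hδpos : 0 < δ := by simp [hδdef]; linarith
    -- the coefficient vector representing L
    set b : Fin k → ℂ :=
      fun i => ⟨L (Pi.single i 1), L (Pi.single i Complex.I)⟩ with hbdef
    have hL : ∀ v : Fin k → ℂ, L v = ∑ i, ((v i) * (starRingEnd ℂ) (b i)).re := by
      intro v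
      have hv : v = ∑ i, ((v i).re • Pi.single (M := fun _ : Fin k => ℂ) i 1 +
          (v i).im • Pi.single (M := fun _ : Fin k => ℂ) i Complex.I) := by
        funext j
        simp only [Finset.sum_apply, Pi.add_apply, Pi.smul_apply, Pi.single_apply]
        have hx : ∀ x : Fin k,
            ((v x).re • (if j = x then (1:ℂ) else 0) +
              (v x).im • (if j = x then Complex.I else 0)) =
            if j = x then v x else 0 := by
          intro x
          split
          · simp [Complex.real_smul, Complex.re_add_im]
          · simp
        rw [Finset.sum_congr rfl (fun x _ => hx x), Finset.sum_ite_eq]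
        simp
      conv_lhs => rw [hv]
      rw [map_sum]
      apply Finset.sum_congr rfl
      intro i _
      rw [map_add, L.map_smul, L.map_smul]
      simp only [smul_eq_mul]
      rw [Complex.mul_re, Complex.conj_re, Complex.conj_im]
      simp only [hbdef]
      ring
    set g : ℂ → ℂ := fun z => ∑ i, b i * φ i z with hgdef
    have hsep : ∀ z ∈ E, ((f z - pstar z) * (starRingEnd ℂ) (g z)).re < -δ := by
      intro z hz
      have hmem : c z ∈ convexHull ℝ (c '' ↑E) :=
        subset_convexHull ℝ _ ⟨z, by simpa using hz, rfl⟩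
      have hlt := hLu _ hmem
      rw [hL (c z)] at hlt
      have heq : ((f z - pstar z) * (starRingEnd ℂ) (g z)).re =
          ∑ i, ((c z i) * (starRingEnd ℂ) (b i)).re := by
        rw [← Complex.re_sum]
        congr 1
        rw [hgdef]
        simp only [map_sum, Finset.mul_sum]
        apply Finset.sum_congr rfl
        intro i _
        simp only [hcdef, map_mul]
        ring
      rw [heq]
      simpa [hδdef] using hlt
    -- pointwise improvement
    have key : ∀ z ∈ Γ, ∃ ε : ℝ, 0 < ε ∧ ∀ t : ℝ, 0 < t → t < ε →
        norm (f z - pstar z + (t : ℂ) * g z) < M := by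
      intro z hz
      by_cases hzE : z ∈ E
      · refine ⟨2 * δ / (Complex.normSq (g z) + 1),
          div_pos (by linarith) (by linarith [Complex.normSq_nonneg (g z)]), ?_⟩
        intro t ht htε
        have hts : t * (Complex.normSq (g z) + 1) < 2 * δ := by
          have hpos : (0:ℝ) < Complex.normSq (g z) + 1 := by
            linarith [Complex.normSq_nonneg (g z)]
          calc t * (Complex.normSq (g z) + 1)
              < (2 * δ / (Complex.normSq (g z) + 1)) * (Complex.normSq (g z) + 1) := by
                exact mul_lt_mul_of_pos_right htε hpos
            _ = 2 * δ := by field_simp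
        have habs : norm (f z - pstar z) = M := (Finset.mem_filter.1 hzE).2
        have hns : Complex.normSq (f z - pstar z) = M ^ 2 := by
          rw [← Complex.sq_norm, habs]
        have hre := hsep z hzE
        have h1 : Complex.normSq (f z - pstar z + (t : ℂ) * g z) < M ^ 2 := by
          rw [Complex.normSq_add]
          have h2 : ((f z - pstar z) * (starRingEnd ℂ) ((t:ℂ) * g z)).re =
              t * ((f z - pstar z) * (starRingEnd ℂ) (g z)).re := by
            rw [map_mul]
            have : (starRingEnd ℂ) ((t:ℂ)) = (t:ℂ) := by
              simp [Complex.conj_ofReal]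
            rw [this]
            rw [show (f z - pstar z) * ((t:ℂ) * (starRingEnd ℂ) (g z)) =
              (t:ℂ) * ((f z - pstar z) * (starRingEnd ℂ) (g z)) by ring]
            exact Complex.re_ofReal_mul _ _
          rw [h2, hns]
          have h3 : Complex.normSq ((t:ℂ) * g z) = t ^ 2 * Complex.normSq (g z) := by
            rw [Complex.normSq_mul, Complex.normSq_ofReal]; ring
          rw [h3]
          have hnsg : 0 ≤ Complex.normSq (g z) := Complex.normSq_nonneg _
          nlinarith [mul_pos ht hδpos]
        calc norm (f z - pstar z + (t:ℂ) * g z)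
            = Real.sqrt (Complex.normSq (f z - pstar z + (t:ℂ) * g z)) := by
              rw [Complex.norm_def]
          _ < Real.sqrt (M ^ 2) := Real.sqrt_lt_sqrt (Complex.normSq_nonneg _) h1
          _ = M := by rw [Real.sqrt_sq hM0.le]
      · have hle : norm (f z - pstar z) ≤ M := by
          rw [hMdef]; exact Finset.le_sup' (fun z => norm (f z - pstar z)) hz
        have hlt : norm (f z - pstar z) < M :=
          lt_of_le_of_ne hle (fun h => hzE (Finset.mem_filter.2 ⟨hz, h⟩))
        refine ⟨(M - norm (f z - pstar z)) / (norm (g z) + 1), ?_, ?_⟩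
        · have : (0:ℝ) < norm (g z) + 1 := by positivity
          exact div_pos (by linarith) this
        intro t ht htε
        have hpos : (0:ℝ) < norm (g z) + 1 := by positivity
        have h2 : t * (norm (g z) + 1) < M - norm (f z - pstar z) := by
          calc t * (norm (g z) + 1)
              < ((M - norm (f z - pstar z)) / (norm (g z) + 1)) *
                  (norm (g z) + 1) := mul_lt_mul_of_pos_right htε hpos
            _ = M - norm (f z - pstar z) := by field_simp
        have h3 : norm ((t:ℂ) * g z) = t * norm (g z) := by
          simp [norm_mul, abs_of_pos ht]
        calc norm (f z - pstar z + (t:ℂ) * g z)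
            ≤ norm (f z - pstar z) + norm ((t:ℂ) * g z) := by
              exact norm_add_le _ _
          _ = norm (f z - pstar z) + t * norm (g z) := by rw [h3]
          _ < M := by nlinarith [norm_nonneg (g z)]
    choose! εf hεpos hεlt using key
    set t : ℝ := (Γ.inf' hΓ εf) / 2 with htdef
    have hinfpos : 0 < Γ.inf' hΓ εf := by
      rw [Finset.lt_inf'_iff]
      exact fun z hz => hεpos z hz
    have ht : 0 < t := by positivity
    have htlt : ∀ z ∈ Γ, t < εf z := by
      intro z hz
      calc t < Γ.inf' hΓ εf := by rw [htdef]; linarith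
        _ ≤ εf z := Finset.inf'_le _ hz
    -- the better approximant
    set β : Fin k → ℂ := fun i => α i - (t : ℂ) * b i with hβdef
    have hpβ : ∀ z, f z - ∑ i, β i * φ i z = f z - pstar z + (t:ℂ) * g z := by
      intro z
      have hsum : ∑ i, β i * φ i z =
          (∑ i, α i * φ i z) - (t:ℂ) * ∑ i, b i * φ i z := by
        rw [Finset.mul_sum, ← Finset.sum_sub_distrib]
        apply Finset.sum_congr rfl
        intro i _
        rw [hβdef]
        ring
      rw [hsum, hpstar]
      ring
    have hb := hbest β
    obtain ⟨z₁, hz₁Γ, hz₁⟩ :=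
      Finset.exists_mem_eq_sup' hΓ (fun z => norm (f z - ∑ i, β i * φ i z))
    rw [hz₁, hpβ z₁] at hb
    have := hεlt z₁ hz₁Γ t ht (htlt z₁ hz₁Γ)
    linarith
  -- Carathéodory
  obtain ⟨ι, hι, zz, w, hzran, hzai, hwpos, hwsum, hcomb⟩ :=
    eq_pos_convex_span_of_mem_convexHull h0
  letI := hι
  haveI hne : Nonempty ι := by
    by_contra hemp
    rw [not_nonempty_iff] at hemp
    simp [Finset.univ_eq_empty] at hwsum
  set ℓ := Fintype.card ι with hℓdef
  have hℓ1 : 1 ≤ ℓ := Fintype.card_pos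
  have hcard : ℓ ≤ 2 * k + 1 := by
    have h1 := hzai.card_le_finrank_succ
    have h2 : Module.finrank ℝ (vectorSpan ℝ (Set.range zz)) ≤
        Module.finrank ℝ (Fin k → ℂ) := Submodule.finrank_le _
    have h3 : Module.finrank ℝ (Fin k → ℂ) = 2 * k := by
      rw [Module.finrank_pi_fintype]
      simp [Complex.finrank_real_complex, mul_comm]
    omega
  have hchoice : ∀ i : ι, ∃ x, x ∈ E ∧ c x = zz i := by
    intro i
    rcases hzran ⟨i, rfl⟩ with ⟨x, hx, hcx⟩
    exact ⟨x, by simpa using hx, hcx⟩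
  choose ζ hζE hζc using hchoice
  set e : Fin ℓ ≃ ι := (Fintype.equivFin ι).symm with hedef
  refine ⟨ℓ, hℓ1, hcard, fun j => ζ (e j), ?_, ?_, ?_, fun j => w (e j), ?_, ?_, ?_⟩
  · intro j j' hjj'
    simp only at hjj'
    have : zz (e j) = zz (e j') := by rw [← hζc, ← hζc, hjj']
    exact e.injective (hzai.injective this)
  · intro j
    exact (Finset.mem_filter.1 (hζE (e j))).1
  · intro j
    exact (Finset.mem_filter.1 (hζE (e j))).2
  · intro j
    exact hwpos (e j)
  · rw [Equiv.sum_comp e w, hwsum]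
  · intro β
    dsimp only
    have hzero : ∀ i : Fin k, ∑ j : Fin ℓ, ((w (e j) : ℝ) : ℂ) * c (ζ (e j)) i = 0 := by
      intro i
      have h4 : ∑ j : Fin ℓ, w (e j) • zz (e j) = (0 : Fin k → ℂ) := by
        rw [Equiv.sum_comp e (fun i => w i • zz i)]
        exact hcomb
      have h5 := congrFun h4 i
      simp only [Finset.sum_apply, Pi.smul_apply, Pi.zero_apply] at h5
      rw [← h5]
      apply Finset.sum_congr rfl
      intro j _
      rw [hζc, Complex.real_smul]
    have hterm : ∀ j : Fin ℓ,
        ((w (e j) : ℝ) : ℂ) * (f (ζ (e j)) - pstar (ζ (e j))) *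
          (starRingEnd ℂ) (∑ i, β i * φ i (ζ (e j))) =
        ∑ i, (starRingEnd ℂ) (β i) * (((w (e j) : ℝ) : ℂ) * c (ζ (e j)) i) := by
      intro j
      rw [map_sum, Finset.mul_sum]
      apply Finset.sum_congr rfl
      intro i _
      simp only [hcdef, map_mul]
      ring
    calc ∑ j, ((w (e j) : ℝ) : ℂ) * (f (ζ (e j)) - pstar (ζ (e j))) *
          (starRingEnd ℂ) (∑ i, β i * φ i (ζ (e j)))
        = ∑ j, ∑ i, (starRingEnd ℂ) (β i) * (((w (e j) : ℝ) : ℂ) * c (ζ (e j)) i) :=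
          Finset.sum_congr rfl (fun j _ => hterm j)
      _ = ∑ i, (starRingEnd ℂ) (β i) * ∑ j, ((w (e j) : ℝ) : ℂ) * c (ζ (e j)) i := by
          rw [Finset.sum_comm]
          apply Finset.sum_congr rfl
          intro i _
          rw [Finset.mul_sum]
      _ = 0 := by
          apply Finset.sum_eq_zero
          intro i _
          rw [hzero i, mul_zero]
end

section
/- Let Γ ⊂ ℝ be a finite nonempty set and let f, φ₁, …, φ_k : ℝ → ℝ be functions. A function p* in the real linear span of φ₁, …, φ_k is a polynomial of best approximation for f on Γ if and only if there exist an integer ℓ with 1 ≤ ℓ ≤ k + 1, pairwise distinct points μ₁, …, μ_ℓ ∈ Γ satisfying |f(μⱼ) − p*(μⱼ)| = max_{z∈Γ} |f(z) − p*(z)| for each j, and positive real numbers ω₁, …, ω_ℓ with ω₁ + ⋯ + ω_ℓ = 1, such that Σ_{j=1}^ℓ ωⱼ (f(μⱼ) − p*(μⱼ)) · p(μⱼ) = 0 for every p in the real linear span of φ₁, …, φ_k. -/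
private lemma rs_aux_ext {E δ t M e q : ℝ} (hδ : 0 < δ) (htpos : 0 < t)
    (ht2a : t * (M ^ 2 + 1) ≤ δ) (hQM : |q| ≤ M) (he : |e| = E) (h1 : δ ≤ e * q) :
    |e - t * q| < E := by
  have hE0 : 0 ≤ E := he ▸ abs_nonneg e
  have he2 : e ^ 2 = E ^ 2 := by rw [← sq_abs, he]
  have hQ2 : q ^ 2 ≤ M ^ 2 := by nlinarith [abs_nonneg q, sq_abs q]
  have ht3 : t * q ^ 2 ≤ δ := by nlinarith
  have ht4 : t * (t * q ^ 2) ≤ t * δ := mul_le_mul_of_nonneg_left ht3 htpos.le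
  have ht5 : t * δ ≤ t * (e * q) := mul_le_mul_of_nonneg_left h1 htpos.le
  have hsq : (e - t * q) ^ 2 < E ^ 2 := by nlinarith [mul_pos htpos hδ]
  nlinarith [abs_nonneg (e - t * q), sq_abs (e - t * q)]

private lemma rs_aux_nonext {E E' t M e q : ℝ} (htpos : 0 < t)
    (ht2b : t * (M + 1) ≤ E - E') (hQM : |q| ≤ M) (he : |e| ≤ E') :
    |e - t * q| < E := by
  have hM0 : 0 ≤ M := le_trans (abs_nonneg q) hQM
  calc |e - t * q| ≤ |e| + |t * q| := abs_sub _ _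
  _ = |e| + t * |q| := by rw [abs_mul, abs_of_pos htpos]
  _ < E := by nlinarith

set_option maxHeartbeats 1000000 in

/-- The Rivlin–Shapiro characterization of best approximation on a finite set of
the real line (real case, with at most `k + 1` extremal points). -/
theorem best_approx_iff_orthogonality_condition_real
    (k : ℕ) (Γ : Finset ℝ) (hΓ : Γ.Nonempty)
    (f : ℝ → ℝ) (φ : Fin k → ℝ → ℝ) (α : Fin k → ℝ)
    (pstar : ℝ → ℝ) (hpstar : pstar = fun z => ∑ i : Fin k, α i * φ i z) :
    (∀ β : Fin k → ℝ,
      (Γ.sup' hΓ fun z => |f z - pstar z|) ≤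
        Γ.sup' hΓ fun z => |f z - ∑ i : Fin k, β i * φ i z|)
    ↔
    ∃ ℓ : ℕ, 1 ≤ ℓ ∧ ℓ ≤ k + 1 ∧
      ∃ μ : Fin ℓ → ℝ, Function.Injective μ ∧ (∀ j, μ j ∈ Γ) ∧
        (∀ j, |f (μ j) - pstar (μ j)| = Γ.sup' hΓ fun z => |f z - pstar z|) ∧
        ∃ ω : Fin ℓ → ℝ, (∀ j, 0 < ω j) ∧ (∑ j, ω j = 1) ∧
          ∀ β : Fin k → ℝ,
            ∑ j, ω j * (f (μ j) - pstar (μ j)) * (∑ i : Fin k, β i * φ i (μ j)) = 0 := by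
  classical
  obtain ⟨z0, hz0⟩ := id hΓ
  set E : ℝ := Γ.sup' hΓ fun z => |f z - pstar z| with hE
  have hE0 : 0 ≤ E :=
    le_trans (abs_nonneg _) (Finset.le_sup' (fun z => |f z - pstar z|) hz0)
  have hle_E : ∀ z ∈ Γ, |f z - pstar z| ≤ E := by
    intro z hz; exact Finset.le_sup' (fun z => |f z - pstar z|) hz
  clear_value E
  constructor
  · intro hbest
    rcases eq_or_lt_of_le hE0 with hE0' | hEpos
    · -- E = 0 case
      refine ⟨1, le_refl 1, by omega, fun _ => z0,
        Function.injective_of_subsingleton _, fun _ => hz0, ?_, fun _ => 1,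
        fun _ => one_pos, by simp, ?_⟩
      · intro j
        have h1 := hle_E z0 hz0
        have h2 := abs_nonneg (f z0 - pstar z0)
        linarith
      · intro β
        have h1 := hle_E z0 hz0
        have h2 := abs_nonneg (f z0 - pstar z0)
        have h3 : f z0 - pstar z0 = 0 := by
          have : |f z0 - pstar z0| = 0 := le_antisymm (by linarith) h2
          exact abs_eq_zero.mp this
        simp [h3]
    · -- E > 0 case
      set v : ℝ → (Fin k → ℝ) := fun z i => (f z - pstar z) * φ i z with hv
      set Γext : Finset ℝ := Γ.filter fun z => |f z - pstar z| = E with hΓext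
      set S : Set (Fin k → ℝ) := v '' ↑Γext with hS
      have h0 : (0 : Fin k → ℝ) ∈ convexHull ℝ S := by
        by_contra h0
        obtain ⟨g, u, hgu, hu0⟩ := geometric_hahn_banach_closed_point
          (convex_convexHull ℝ S) ((Γext.finite_toSet.image v).isClosed_convexHull (𝕜 := ℝ)) h0
        have hg0 : g 0 = 0 := map_zero g
        have hδpre : 0 < -u := by rw [hg0] at hu0; linarith
        set δ : ℝ := -u with hδdef
        have hδ : 0 < δ := hδpre
        set β : Fin k → ℝ := fun i => -(g (Pi.single i 1)) with hβ
        have hgv : ∀ x : Fin k → ℝ, g x = ∑ i, x i * g (Pi.single i 1) := by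
          intro x
          have hx : x = ∑ i, x i • (Pi.single i 1 : Fin k → ℝ) := by
            funext j
            simp [Pi.single_apply, Finset.sum_apply, mul_ite, eq_comm]
          calc g x = g (∑ i, x i • (Pi.single i 1 : Fin k → ℝ)) := by rw [← hx]
          _ = ∑ i, x i * g ((Pi.single i 1 : Fin k → ℝ)) := by
              rw [map_sum]; simp [smul_eq_mul]
        have hkey : ∀ z ∈ Γext, δ ≤ (f z - pstar z) * (∑ i, β i * φ i z) := by
          intro z hz
          have h1 : g (v z) < u :=
            hgu _ (subset_convexHull ℝ S ⟨z, Finset.mem_coe.mpr hz, rfl⟩)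
          have h2 : (f z - pstar z) * (∑ i, β i * φ i z) = -g (v z) := by
            rw [hgv (v z), ← Finset.sum_neg_distrib, Finset.mul_sum]
            refine Finset.sum_congr rfl fun i _ => ?_
            simp only [hv, hβ]
            ring
          rw [h2, hδdef]
          linarith
        clear_value δ
        set M : ℝ := Γ.sup' hΓ fun z => |∑ i, β i * φ i z| with hM
        have hM0 : 0 ≤ M :=
          le_trans (abs_nonneg _) (Finset.le_sup' (fun z => |∑ i, β i * φ i z|) hz0)
        have hle_M : ∀ z ∈ Γ, |∑ i, β i * φ i z| ≤ M := by
          intro z hz; exact Finset.le_sup' (fun z => |∑ i, β i * φ i z|) hz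
        clear_value M
        set E' : ℝ := Γ.sup' hΓ
          fun z => if |f z - pstar z| = E then 0 else |f z - pstar z| with hE'
        have hle_E' : ∀ z ∈ Γ, |f z - pstar z| ≠ E → |f z - pstar z| ≤ E' := by
          intro z hz hne
          have h2 := Finset.le_sup' (α := ℝ)
            (fun z => if |f z - pstar z| = E then 0 else |f z - pstar z|) hz
          rw [if_neg hne] at h2
          exact h2
        have hE'E : E' < E := by
          rw [hE', Finset.sup'_lt_iff]
          intro z hzΓ
          by_cases hc : |f z - pstar z| = E
          · simpa [hc] using hEpos
          · simpa [hc] using lt_of_le_of_ne (hle_E z hzΓ) hc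
        clear_value E'
        set t : ℝ := min (δ / (M ^ 2 + 1)) ((E - E') / (M + 1)) with ht
        have htpos : 0 < t :=
          lt_min (div_pos hδ (by positivity)) (div_pos (by linarith) (by positivity))
        have ht2a : t * (M ^ 2 + 1) ≤ δ := by
          rw [← le_div_iff₀ (by positivity : (0:ℝ) < M ^ 2 + 1)]
          exact min_le_left _ _
        have ht2b : t * (M + 1) ≤ E - E' := by
          rw [← le_div_iff₀ (by positivity : (0:ℝ) < M + 1)]
          exact min_le_right _ _
        clear_value t
        have hcontr := hbest fun i => α i + t * β i
        have hlt : (Γ.sup' hΓ fun z => |f z - ∑ i, (α i + t * β i) * φ i z|) < E := by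
          rw [Finset.sup'_lt_iff]
          intro z hzΓ
          have hqz : ∑ i, (α i + t * β i) * φ i z = pstar z + t * ∑ i, β i * φ i z := by
            rw [hpstar]
            rw [Finset.mul_sum, ← Finset.sum_add_distrib]
            refine Finset.sum_congr rfl fun i _ => ?_
            ring
          rw [hqz]
          have hQM : |∑ i, β i * φ i z| ≤ M := hle_M z hzΓ
          set Q : ℝ := ∑ i, β i * φ i z with hQdef
          have harg : f z - (pstar z + t * Q) = (f z - pstar z) - t * Q := by ring
          rw [harg]
          by_cases hzext : |f z - pstar z| = E
          · have h1 : δ ≤ (f z - pstar z) * Q := hkey z (Finset.mem_filter.mpr ⟨hzΓ, hzext⟩)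
            exact rs_aux_ext hδ htpos ht2a hQM hzext h1
          · have h1 : |f z - pstar z| ≤ E' := hle_E' z hzΓ hzext
            exact rs_aux_nonext htpos ht2b hQM h1
        linarith
      -- Extract finite positive convex combination via Carathéodory
      obtain ⟨ι, hι, zv, w, hrange, haff, hwpos, hwsum, hwz⟩ :=
        eq_pos_convex_span_of_mem_convexHull h0
      letI := hι
      have hne : Nonempty ι := by
        by_contra h
        haveI : IsEmpty ι := not_nonempty_iff.mp h
        rw [Finset.univ_eq_empty, Finset.sum_empty] at hwsum
        exact one_ne_zero hwsum.symm
      set ℓ : ℕ := Fintype.card ι with hℓ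
      have hℓ1 : 1 ≤ ℓ := Fintype.card_pos
      have hℓk : ℓ ≤ k + 1 := by
        have h1 := haff.card_le_finrank_succ
        have h2 : Module.finrank ℝ (vectorSpan ℝ (Set.range zv)) ≤
            Module.finrank ℝ (Fin k → ℝ) := Submodule.finrank_le _
        have h3 : Module.finrank ℝ (Fin k → ℝ) = k := Module.finrank_fin_fun ℝ
        omega
      choose μ0 hμ0 hvμ0 using fun i => hrange (Set.mem_range_self i)
      set eqv : Fin ℓ ≃ ι := (Fintype.equivFin ι).symm with heqv
      refine ⟨ℓ, hℓ1, hℓk, fun j => μ0 (eqv j), ?_, ?_, ?_, fun j => w (eqv j), ?_, ?_, ?_⟩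
      · intro j1 j2 h
        have h1 : v (μ0 (eqv j1)) = v (μ0 (eqv j2)) := congrArg v h
        rw [hvμ0, hvμ0] at h1
        exact eqv.injective (haff.injective h1)
      · intro j
        exact (Finset.mem_filter.mp (Finset.mem_coe.mp (hμ0 (eqv j)))).1
      · intro j
        exact (Finset.mem_filter.mp (Finset.mem_coe.mp (hμ0 (eqv j)))).2
      · intro j; exact hwpos (eqv j)
      · rw [← hwsum]
        exact Fintype.sum_equiv eqv (fun j => w (eqv j)) w fun j => rfl
      · intro β
        have hcomp : ∀ i0 : Fin k, ∑ i : ι, w i * zv i i0 = 0 := by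
          intro i0
          have h1 := congrFun hwz i0
          simpa [Finset.sum_apply] using h1
        calc ∑ j, w (eqv j) * (f (μ0 (eqv j)) - pstar (μ0 (eqv j))) *
              (∑ i, β i * φ i (μ0 (eqv j)))
            = ∑ j, ∑ i, β i * (w (eqv j) * zv (eqv j) i) := by
              refine Finset.sum_congr rfl fun j _ => ?_
              rw [Finset.mul_sum]
              refine Finset.sum_congr rfl fun i _ => ?_
              have h2 : zv (eqv j) i =
                  (f (μ0 (eqv j)) - pstar (μ0 (eqv j))) * φ i (μ0 (eqv j)) := by
                rw [← hvμ0 (eqv j)]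
              rw [h2]; ring
          _ = ∑ i, β i * ∑ j : Fin ℓ, w (eqv j) * zv (eqv j) i := by
              rw [Finset.sum_comm]
              exact Finset.sum_congr rfl fun i _ => (Finset.mul_sum _ _ _).symm
          _ = 0 := by
              refine Finset.sum_eq_zero fun i _ => ?_
              have h3 : ∑ j : Fin ℓ, w (eqv j) * zv (eqv j) i
                  = ∑ i' : ι, w i' * zv i' i :=
                Fintype.sum_equiv eqv (fun j => w (eqv j) * zv (eqv j) i)
                  (fun i' => w i' * zv i' i) fun j => rfl
              rw [h3, hcomp i, mul_zero]
  · rintro ⟨ℓ, hℓ1, hℓk, μ, hinj, hμΓ, hext, ω, hωpos, hωsum, horth⟩ β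
    set B : ℝ := Γ.sup' hΓ fun z => |f z - ∑ i, β i * φ i z| with hB
    have hB0 : 0 ≤ B :=
      le_trans (abs_nonneg _) (Finset.le_sup' (fun z => |f z - ∑ i, β i * φ i z|) hz0)
    have hle_B : ∀ z ∈ Γ, |f z - ∑ i, β i * φ i z| ≤ B := by
      intro z hz; exact Finset.le_sup' (fun z => |f z - ∑ i, β i * φ i z|) hz
    clear_value B
    have hsub : ∀ z, (∑ i, (α i - β i) * φ i z) = pstar z - ∑ i, β i * φ i z := by
      intro z
      rw [hpstar, ← Finset.sum_sub_distrib]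
      refine Finset.sum_congr rfl fun i _ => ?_
      ring
    have h2 := horth fun i => α i - β i
    have h2' : ∑ j, ω j * (f (μ j) - pstar (μ j)) *
        (pstar (μ j) - ∑ i, β i * φ i (μ j)) = 0 := by
      rw [← h2]
      exact Finset.sum_congr rfl fun j _ => by rw [hsub]
    have h1 : ∑ j, ω j * (f (μ j) - pstar (μ j)) *
        (f (μ j) - ∑ i, β i * φ i (μ j)) = E * E := by
      have h3 : ∀ j : Fin ℓ, ω j * (f (μ j) - pstar (μ j)) *
          (f (μ j) - ∑ i, β i * φ i (μ j))
          = ω j * (f (μ j) - pstar (μ j)) * (f (μ j) - pstar (μ j))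
            + ω j * (f (μ j) - pstar (μ j)) * (pstar (μ j) - ∑ i, β i * φ i (μ j)) := by
        intro j; ring
      rw [Finset.sum_congr rfl fun j _ => h3 j, Finset.sum_add_distrib, h2', add_zero]
      have h4 : ∀ j : Fin ℓ, ω j * (f (μ j) - pstar (μ j)) * (f (μ j) - pstar (μ j))
          = ω j * (E * E) := by
        intro j
        have h5 : (f (μ j) - pstar (μ j)) * (f (μ j) - pstar (μ j)) = E * E := by
          have := hext j
          nlinarith [sq_abs (f (μ j) - pstar (μ j))]
        rw [mul_assoc, h5]
      rw [Finset.sum_congr rfl fun j _ => h4 j, ← Finset.sum_mul, hωsum, one_mul]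
    have key : E * E ≤ E * B := by
      rw [← h1]
      have h6 : ∀ j : Fin ℓ, ω j * (f (μ j) - pstar (μ j)) *
          (f (μ j) - ∑ i, β i * φ i (μ j)) ≤ ω j * (E * B) := by
        intro j
        have ha : |f (μ j) - ∑ i, β i * φ i (μ j)| ≤ B := hle_B _ (hμΓ j)
        have hb : |f (μ j) - pstar (μ j)| = E := hext j
        have hc := (hωpos j).le
        calc ω j * (f (μ j) - pstar (μ j)) * (f (μ j) - ∑ i, β i * φ i (μ j))
            ≤ |ω j * (f (μ j) - pstar (μ j)) * (f (μ j) - ∑ i, β i * φ i (μ j))| :=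
              le_abs_self _
          _ = ω j * (|f (μ j) - pstar (μ j)| * |f (μ j) - ∑ i, β i * φ i (μ j)|) := by
              rw [abs_mul, abs_mul, abs_of_nonneg hc, mul_assoc]
          _ ≤ ω j * (E * B) := by
              rw [hb]
              exact mul_le_mul_of_nonneg_left
                (mul_le_mul_of_nonneg_left ha hE0) hc
      calc ∑ j, ω j * (f (μ j) - pstar (μ j)) * (f (μ j) - ∑ i, β i * φ i (μ j))
          ≤ ∑ j, ω j * (E * B) := Finset.sum_le_sum fun j _ => h6 j
        _ = E * B := by rw [← Finset.sum_mul, hωsum, one_mul]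
    rcases eq_or_lt_of_le hE0 with hE0' | hEpos
    · rw [← hE0']; exact hB0
    · exact le_of_mul_le_mul_left (by linarith [key]) hEpos
end

section
/- Let Γ ⊂ ℂ be a finite nonempty set closed under complex conjugation, let f, φ₁, …, φ_k : ℂ → ℂ be functions satisfying conj(f(z)) = f(conj(z)) and conj(φᵢ(z)) = φᵢ(conj(z)) for all z ∈ Γ and i = 1, …, k, and let p* = Σ_{i=1}^k αᵢφᵢ with real coefficients αᵢ ∈ ℝ. Suppose there are pairwise distinct points μ₁, …, μ_ℓ ∈ Γ and positive reals ω₁, …, ω_ℓ with Σⱼ ωⱼ = 1 such that Σ_{j=1}^ℓ ωⱼ (f(μⱼ) − p*(μⱼ)) · conj(p(μⱼ)) = 0 for every p in the real linear span of φ₁, …, φ_k. Then there exist pairwise distinct points θ₁, …, θ_m ∈ Γ whose set {θ₁, …, θ_m} is closed under complex conjugation, with {μ₁, …, μ_ℓ} ⊆ {θ₁, …, θ_m} and ℓ ≤ m ≤ 2ℓ, and positive reals ω̃₁, …, ω̃_m with Σᵢ ω̃ᵢ = 1 such that ω̃ᵢ = ω̃ⱼ whenever θⱼ = conj(θᵢ),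 and Σ_{i=1}^m ω̃ᵢ (f(θᵢ) − p*(θᵢ)) · conj(p(θᵢ)) = 0 for every p in the real linear span of φ₁, …, φ_k. -/
/-- Symmetrization of the orthogonality condition with respect to the real axis:
from extremal points `μ₁, …, μ_ℓ` and weights `ω₁, …, ω_ℓ` one obtains a
conjugation-closed set of points `θ₁, …, θ_m` with `ℓ ≤ m ≤ 2ℓ` and weights
`ω̃₁, …, ω̃_m` that are symmetric under conjugation and satisfy the same
orthogonality condition for the real span. -/
theorem symmetrized_orthogonality_condition
    (k : ℕ) (Γ : Finset ℂ)
    (hΓsym : ∀ z ∈ Γ, (starRingEnd ℂ) z ∈ Γ)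
    (f : ℂ → ℂ) (φ : Fin k → ℂ → ℂ)
    (hf : ∀ z ∈ Γ, (starRingEnd ℂ) (f z) = f ((starRingEnd ℂ) z))
    (hφ : ∀ i, ∀ z ∈ Γ, (starRingEnd ℂ) (φ i z) = φ i ((starRingEnd ℂ) z))
    (α : Fin k → ℝ)
    (pstar : ℂ → ℂ) (hpstar : pstar = fun z => ∑ i : Fin k, (α i : ℂ) * φ i z)
    (ℓ : ℕ) (μ : Fin ℓ → ℂ) (hμinj : Function.Injective μ) (hμΓ : ∀ j, μ j ∈ Γ)
    (ω : Fin ℓ → ℝ) (hωpos : ∀ j, 0 < ω j) (hωsum : ∑ j, ω j = 1)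
    (horth : ∀ β : Fin k → ℝ,
      ∑ j, (ω j : ℂ) * (f (μ j) - pstar (μ j)) *
        (starRingEnd ℂ) (∑ i : Fin k, (β i : ℂ) * φ i (μ j)) = 0) :
    ∃ m : ℕ, ℓ ≤ m ∧ m ≤ 2 * ℓ ∧
      ∃ θ : Fin m → ℂ, Function.Injective θ ∧ (∀ i, θ i ∈ Γ) ∧
        (∀ i, ∃ i', θ i' = (starRingEnd ℂ) (θ i)) ∧
        (∀ j, ∃ i, θ i = μ j) ∧
        ∃ ωt : Fin m → ℝ, (∀ i, 0 < ωt i) ∧ (∑ i, ωt i = 1) ∧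
          (∀ i i', θ i' = (starRingEnd ℂ) (θ i) → ωt i' = ωt i) ∧
          ∀ β : Fin k → ℝ,
            ∑ i, (ωt i : ℂ) * (f (θ i) - pstar (θ i)) *
              (starRingEnd ℂ) (∑ r : Fin k, (β r : ℂ) * φ r (θ i)) = 0 := by
  classical
  set S : Finset ℂ :=
    (Finset.univ.image μ) ∪ (Finset.univ.image fun j => (starRingEnd ℂ) (μ j)) with hS
  have hmemS : ∀ z, z ∈ S ↔ (∃ j, μ j = z) ∨ ∃ j, (starRingEnd ℂ) (μ j) = z := by
    intro z; simp [hS]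
  have hSΓ : ∀ z ∈ S, z ∈ Γ := by
    intro z hz
    rcases (hmemS z).1 hz with ⟨j, rfl⟩ | ⟨j, rfl⟩
    · exact hμΓ j
    · exact hΓsym _ (hμΓ j)
  have hSconj : ∀ z ∈ S, (starRingEnd ℂ) z ∈ S := by
    intro z hz
    rcases (hmemS z).1 hz with ⟨j, rfl⟩ | ⟨j, rfl⟩
    · exact (hmemS _).2 (Or.inr ⟨j, rfl⟩)
    · exact (hmemS _).2 (Or.inl ⟨j, by simp⟩)
  have hμS : ∀ j, μ j ∈ S := fun j => (hmemS _).2 (Or.inl ⟨j, rfl⟩)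
  -- the weight functions
  set w0 : ℂ → ℝ := fun z => ∑ j, if μ j = z then ω j else 0 with hw0
  set wt : ℂ → ℝ := fun z => (w0 z + w0 ((starRingEnd ℂ) z)) / 2 with hwt
  have hw0nonneg : ∀ z, 0 ≤ w0 z := by
    intro z
    apply Finset.sum_nonneg
    intro j _
    split <;> [exact (hωpos j).le; exact le_rfl]
  have hw0μ : ∀ j, w0 (μ j) = ω j := by
    intro j
    rw [hw0]
    simp only
    rw [Finset.sum_eq_single j]
    · simp
    · intro b _ hb
      rw [if_neg fun h => hb (hμinj h)]
    · simp
  -- reindexing sums over S by conjugation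
  have hreindex : ∀ {M : Type} [AddCommMonoid M] (h : ℂ → M),
      ∑ z ∈ S, h ((starRingEnd ℂ) z) = ∑ z ∈ S, h z := by
    intro M _ h
    apply Finset.sum_nbij' (i := fun z => (starRingEnd ℂ) z) (j := fun z => (starRingEnd ℂ) z)
    · intro a ha; exact hSconj a ha
    · intro a ha; exact hSconj a ha
    · intro a _; simp
    · intro a _; simp
    · intro a _; rfl
  -- sum of w0 over S
  have hsumw0 : ∑ z ∈ S, w0 z = 1 := by
    rw [hw0]
    simp only
    rw [Finset.sum_comm]
    rw [← hωsum]
    apply Finset.sum_congr rfl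
    intro j _
    rw [Finset.sum_ite_eq]
    simp [hμS j]
  -- the complex-weighted sum lemma
  have hsumw0c : ∀ g : ℂ → ℂ, ∑ z ∈ S, (w0 z : ℂ) * g z = ∑ j, (ω j : ℂ) * g (μ j) := by
    intro g
    have : ∀ z, (w0 z : ℂ) = ∑ j, if μ j = z then (ω j : ℂ) else 0 := by
      intro z; rw [hw0]; push_cast [apply_ite (fun r : ℝ => (r : ℂ))]; rfl
    calc ∑ z ∈ S, (w0 z : ℂ) * g z
        = ∑ z ∈ S, ∑ j, (if μ j = z then (ω j : ℂ) else 0) * g z := by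
          apply Finset.sum_congr rfl; intro z _; rw [this, Finset.sum_mul]
      _ = ∑ j, ∑ z ∈ S, (if μ j = z then (ω j : ℂ) * g z else 0) := by
          rw [Finset.sum_comm]
          apply Finset.sum_congr rfl; intro z _
          apply Finset.sum_congr rfl; intro j _
          rw [ite_mul, zero_mul]
      _ = ∑ j, (ω j : ℂ) * g (μ j) := by
          apply Finset.sum_congr rfl; intro j _
          rw [Finset.sum_ite_eq]
          simp [hμS j]
  -- positivity of wt on S
  have hwtpos : ∀ z ∈ S, 0 < wt z := by
    intro z hz
    rw [hwt]
    simp only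
    have : 0 < w0 z + w0 ((starRingEnd ℂ) z) := by
      rcases (hmemS z).1 hz with ⟨j, rfl⟩ | ⟨j, rfl⟩
      · have := hw0μ j
        have h2 := hw0nonneg ((starRingEnd ℂ) (μ j))
        nlinarith [hωpos j]
      · have h1 : w0 ((starRingEnd ℂ) ((starRingEnd ℂ) (μ j))) = ω j := by
          rw [Complex.conj_conj]; exact hw0μ j
        have h2 := hw0nonneg ((starRingEnd ℂ) (μ j))
        nlinarith [hωpos j]
    linarith
  have hwtconj : ∀ z, wt ((starRingEnd ℂ) z) = wt z := by
    intro z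
    rw [hwt]
    simp only [Complex.conj_conj]
    ring
  -- total weight
  have hsumwt : ∑ z ∈ S, wt z = 1 := by
    rw [hwt]
    simp only
    rw [← Finset.sum_div, Finset.sum_add_distrib, hsumw0,
      hreindex (fun z => w0 z), hsumw0]
    norm_num
  -- the integrand and its conjugation property
  set g : (Fin k → ℝ) → ℂ → ℂ := fun β z =>
    (f z - pstar z) * (starRingEnd ℂ) (∑ i : Fin k, (β i : ℂ) * φ i z) with hg
  have hgconj : ∀ β, ∀ z ∈ Γ, (starRingEnd ℂ) (g β z) = g β ((starRingEnd ℂ) z) := by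
    intro β z hz
    rw [hg]
    simp only [map_mul, map_sub, Complex.conj_conj]
    congr 1
    · rw [hf z hz, hpstar]
      simp only [map_sum, map_mul, Complex.conj_ofReal]
      congr 1
      apply Finset.sum_congr rfl
      intro i _
      rw [hφ i z hz]
    · rw [map_sum]
      apply Finset.sum_congr rfl
      intro i _
      rw [map_mul, Complex.conj_ofReal, hφ i _ (hΓsym z hz), Complex.conj_conj]
  have horthconj : ∀ β : Fin k → ℝ, ∑ j, (ω j : ℂ) * g β ((starRingEnd ℂ) (μ j)) = 0 := by
    intro β
    have h0 := horth β
    have : (starRingEnd ℂ) (∑ j, (ω j : ℂ) * g β (μ j)) = 0 := by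
      have : ∑ j, (ω j : ℂ) * g β (μ j) = 0 := by
        rw [← h0]; apply Finset.sum_congr rfl; intro j _; rw [hg]; ring
      rw [this, map_zero]
    rw [map_sum] at this
    rw [← this]
    apply Finset.sum_congr rfl
    intro j _
    rw [map_mul, Complex.conj_ofReal, hgconj β _ (hμΓ j)]
  -- full orthogonality over S
  have horthS : ∀ β : Fin k → ℝ, ∑ z ∈ S, (wt z : ℂ) * g β z = 0 := by
    intro β
    have h1 : ∑ z ∈ S, (w0 z : ℂ) * g β z = 0 := by
      rw [hsumw0c]
      rw [← horth β]
      apply Finset.sum_congr rfl; intro j _; rw [hg]; ring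
    have h2 : ∑ z ∈ S, (w0 ((starRingEnd ℂ) z) : ℂ) * g β z = 0 := by
      have := hreindex (M := ℂ) (fun z => (w0 ((starRingEnd ℂ) z) : ℂ) * g β z)
      simp only [Complex.conj_conj] at this
      rw [← this, hsumw0c (fun z => g β ((starRingEnd ℂ) z)), horthconj β]
    calc ∑ z ∈ S, (wt z : ℂ) * g β z
        = ∑ z ∈ S, ((w0 z : ℂ) * g β z + (w0 ((starRingEnd ℂ) z) : ℂ) * g β z) / 2 := by
          apply Finset.sum_congr rfl; intro z _
          rw [hwt]; push_cast; ring
      _ = 0 := by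
          rw [← Finset.sum_div, Finset.sum_add_distrib, h1, h2]
          norm_num
  -- cardinality bounds
  have hcard1 : ℓ ≤ S.card := by
    have h := Finset.card_le_card (Finset.subset_union_left :
      Finset.univ.image μ ⊆ S)
    rwa [Finset.card_image_of_injective _ hμinj, Finset.card_univ, Fintype.card_fin] at h
  have hcard2 : S.card ≤ 2 * ℓ := by
    have h := Finset.card_union_le (Finset.univ.image μ)
      (Finset.univ.image fun j => (starRingEnd ℂ) (μ j))
    rw [← hS] at h
    have h1 := Finset.card_image_le (s := (Finset.univ : Finset (Fin ℓ))) (f := μ)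
    have h2 := Finset.card_image_le (s := (Finset.univ : Finset (Fin ℓ)))
      (f := fun j => (starRingEnd ℂ) (μ j))
    simp only [Finset.card_univ, Fintype.card_fin] at h1 h2
    omega
  -- define θ
  refine ⟨S.card, hcard1, hcard2, fun i => ((S.equivFin.symm i : S) : ℂ), ?_, ?_, ?_, ?_, ?_⟩
  · intro i i' h
    have := Subtype.ext h
    exact S.equivFin.symm.injective this
  · intro i; exact hSΓ _ (S.equivFin.symm i).2
  · intro i
    refine ⟨S.equivFin ⟨(starRingEnd ℂ) ((S.equivFin.symm i : S) : ℂ),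
      hSconj _ (S.equivFin.symm i).2⟩, ?_⟩
    simp
  · intro j
    exact ⟨S.equivFin ⟨μ j, hμS j⟩, by simp⟩
  · refine ⟨fun i => wt ((S.equivFin.symm i : S) : ℂ), ?_, ?_, ?_, ?_⟩
    · intro i; exact hwtpos _ (S.equivFin.symm i).2
    · rw [← hsumwt, ← Finset.sum_coe_sort S wt]
      exact Fintype.sum_equiv S.equivFin.symm _ _ (fun i => rfl)
    · intro i i' h
      have h' : ((S.equivFin.symm i' : S) : ℂ)
          = (starRingEnd ℂ) ((S.equivFin.symm i : S) : ℂ) := h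
      show wt ((S.equivFin.symm i' : S) : ℂ) = wt ((S.equivFin.symm i : S) : ℂ)
      rw [h', hwtconj]
    · intro β
      beta_reduce
      have := horthS β
      rw [← Finset.sum_coe_sort S (fun z => (wt z : ℂ) * g β z)] at this
      rw [← Fintype.sum_equiv S.equivFin.symm
        (fun i => (wt ((S.equivFin.symm i : S) : ℂ) : ℂ) * g β ((S.equivFin.symm i : S) : ℂ))
        (fun x => (wt (x : ℂ) : ℂ) * g β (x : ℂ)) (fun i => rfl)] at this
      rw [← this]
      apply Finset.sum_congr rfl
      intro i _
      rw [hg]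
      ring
end

section
/- Let A ∈ ℂ^{n×n} be a normal matrix and let k ≥ 1. Then the supremum over all unit vectors v ∈ ℂⁿ of the infimum of ‖A^k v − Σ_{i=0}^{k-1} αᵢ Aⁱ v‖ over all coefficients α₀, …, α_{k−1} ∈ ℂ equals the infimum over monic polynomials p ∈ ℂ[X] of degree exactly k of the spectral norm ‖p(A)‖. (This is the Chebyshev matrix approximation instance f(z) = z^k, φᵢ(z) = z^{i−1} of the max-min/min-max equality.) -/
set_option maxHeartbeats 1000000
open Polynomial

private lemma combo_lt {a b x y c : ℝ} (ha : 0 ≤ a) (hb : 0 ≤ b) (hab : a + b = 1)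
    (hx : x < c) (hy : y < c) : a * x + b * y < c := by
  rcases eq_or_lt_of_le ha with h | h
  · simp only [← h, zero_mul, zero_add]
    have : b = 1 := by linarith
    simpa [this] using hy
  · have h1 : a * x < a * c := mul_lt_mul_of_pos_left hx h
    have h2 : b * y ≤ b * c := mul_le_mul_of_nonneg_left hy.le hb
    have h3 : a * c + b * c = c := by rw [← add_mul, hab, one_mul]
    linarith

/-- Separation lemma: existence of optimal weights for the minimax problem. -/
private lemma sep_weights {m k : ℕ} [NeZero m] (F : (Fin k → ℂ) → Fin m → ℝ)
    (hconv : ∀ j, ConvexOn ℝ Set.univ (fun α => F α j))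
    (hnn : ∀ α j, 0 ≤ F α j) :
    ∃ w : Fin m → ℝ, (∀ j, 0 ≤ w j) ∧ (∑ j, w j = 1) ∧
      ∀ α, (⨅ α' : Fin k → ℂ, ⨆ j, F α' j) ≤ ∑ j, w j * F α j := by
  haveI : Nonempty (Fin m) := Fin.pos_iff_nonempty.mp (Nat.pos_of_ne_zero (NeZero.ne m))
  set E : ℝ := ⨅ α' : Fin k → ℂ, ⨆ j, F α' j with hE
  have hSnn : ∀ α, 0 ≤ ⨆ j, F α j := fun α =>
    le_ciSup_of_le (Set.Finite.bddAbove (Set.finite_range _)) (Classical.arbitrary _) (hnn α _)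
  have hEle : ∀ α, E ≤ ⨆ j, F α j := fun α =>
    ciInf_le ⟨0, by rintro x ⟨α', rfl⟩; exact hSnn α'⟩ α
  set s : Set (Fin m → ℝ) := {y | ∀ j, y j < E} with hs
  set t : Set (Fin m → ℝ) := {y | ∃ α, ∀ j, F α j ≤ y j} with ht
  have hsopen : IsOpen s := by
    have : s = ⋂ j, {y : Fin m → ℝ | y j < E} := by ext y; simp [hs]
    rw [this]
    exact isOpen_iInter_of_finite fun j => isOpen_lt (continuous_apply j) continuous_const
  have hsconv : Convex ℝ s := by
    intro y hy z hz a b ha hb hab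
    intro j
    exact combo_lt ha hb hab (hy j) (hz j)
  have htconv : Convex ℝ t := by
    rintro y ⟨α, hα⟩ z ⟨β, hβ⟩ a b ha hb hab
    refine ⟨a • α + b • β, fun j => ?_⟩
    calc F (a • α + b • β) j ≤ a * F α j + b * F β j := by
          simpa [smul_eq_mul] using
            (hconv j).2 (Set.mem_univ α) (Set.mem_univ β) ha hb hab
      _ ≤ a * y j + b * z j := by
          have := hα j; have := hβ j
          have h1 : a * F α j ≤ a * y j := by nlinarith [hα j]
          have h2 : b * F β j ≤ b * z j := by nlinarith [hβ j]
          linarith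
      _ = (a • y + b • z) j := by simp [smul_eq_mul]
  have hdisj : Disjoint s t := by
    rw [Set.disjoint_left]
    rintro y hys ⟨α, hα⟩
    obtain ⟨j0, hj0⟩ := Finite.exists_max (F α)
    have h1 : (⨆ j, F α j) ≤ F α j0 := ciSup_le hj0
    have : E ≤ y j0 := le_trans (hEle α) (le_trans h1 (hα j0))
    exact absurd (hys j0) (not_lt.mpr this)
  obtain ⟨g, u, hsu, htu⟩ := geometric_hahn_banach_open hsconv hsopen htconv hdisj
  set w : Fin m → ℝ := fun j => g (Pi.single j 1) with hw
  have hgy : ∀ y : Fin m → ℝ, g y = ∑ j, y j * w j := by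
    intro y
    have hy : y = ∑ j, (y j) • (Pi.single j (1:ℝ) : Fin m → ℝ) := by
      ext i
      simp [Finset.sum_apply, Pi.single_apply]
    conv_lhs => rw [hy]
    rw [map_sum]
    simp [hw, smul_eq_mul]
  -- t is nonempty
  have ht0 : (fun j => F 0 j) ∈ t := ⟨0, fun j => le_refl _⟩
  -- points of s
  have hsmem : ∀ ε > (0:ℝ), (fun _ => E - ε) ∈ s := fun ε hε j => by simp; linarith
  -- nonnegativity of w
  have hwnn : ∀ j, 0 ≤ w j := by
    intro j
    by_contra hneg
    push_neg at hneg
    set y0 : Fin m → ℝ := fun j => F 0 j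
    set c : ℝ := (g y0 - u + 1) / (-(w j)) with hc
    have hgy0 : u ≤ g y0 := htu _ ht0
    have hcpos : 0 ≤ c := by
      apply div_nonneg <;> linarith
    have hmem : (y0 + c • (Pi.single j (1:ℝ) : Fin m → ℝ)) ∈ t := by
      refine ⟨0, fun i => ?_⟩
      simp only [Pi.add_apply, Pi.smul_apply, smul_eq_mul]
      rcases eq_or_ne i j with rfl | hne
      · simp only [Pi.single_eq_same, mul_one]
        have : (0:ℝ) ≤ c := hcpos
        simp only [y0]; linarith [le_refl (F 0 i)]
      · simp [Pi.single_eq_of_ne hne, y0]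
    have : u ≤ g (y0 + c • (Pi.single j (1:ℝ) : Fin m → ℝ)) := htu _ hmem
    rw [map_add, map_smul] at this
    have hgc : g (Pi.single j 1) = w j := rfl
    rw [smul_eq_mul, hgc] at this
    have : u ≤ g y0 + c * w j := this
    have hcw : c * w j = -(g y0 - u + 1) := by
      have hne : -w j ≠ 0 := neg_ne_zero.mpr (ne_of_lt hneg)
      have h4 : c * -w j = g y0 - u + 1 := by rw [hc]; exact div_mul_cancel₀ _ hne
      have h5 : c * w j = -(c * -w j) := by ring
      rw [h5, h4]
    rw [hcw] at this
    linarith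
  set W : ℝ := ∑ j, w j with hW
  have hWnn : 0 ≤ W := Finset.sum_nonneg fun j _ => hwnn j
  have hgs : ∀ ε > (0:ℝ), (E - ε) * W < u := by
    intro ε hε
    have := hsu _ (hsmem ε hε)
    rw [hgy] at this
    simpa [Finset.mul_sum, hW, Finset.sum_mul] using this
  have hWpos : 0 < W := by
    rcases eq_or_lt_of_le hWnn with h | h
    · exfalso
      have hz : ∀ j, w j = 0 := by
        intro j
        have := (Finset.sum_eq_zero_iff_of_nonneg (fun j _ => hwnn j)).mp h.symm
        exact this j (Finset.mem_univ j)
      have h1 : (0:ℝ) < u := by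
        have := hsu _ (hsmem 1 one_pos)
        rw [hgy] at this
        simpa [hz] using this
      have h2 : u ≤ 0 := by
        have := htu _ ht0
        rw [hgy] at this
        simpa [hz] using this
      linarith
    · exact h
  have hEWu : E * W ≤ u := by
    by_contra hlt
    push_neg at hlt
    set ε : ℝ := (E * W - u) / (W + 1) with hε
    have hεpos : 0 < ε := div_pos (by linarith) (by linarith)
    have := hgs ε hεpos
    have hεW : ε * W ≤ ε * (W + 1) := by nlinarith
    have hεW1 : ε * (W + 1) = E * W - u := by rw [hε]; field_simp
    nlinarith
  refine ⟨fun j => w j / W, fun j => div_nonneg (hwnn j) hWnn, ?_, ?_⟩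
  · rw [← Finset.sum_div]; field_simp
    exact hW.symm
  · intro α
    have hmem : (fun j => F α j) ∈ t := ⟨α, fun j => le_refl _⟩
    have h1 : u ≤ ∑ j, F α j * w j := by
      have := htu _ hmem; rwa [hgy] at this
    have h2 : ∑ j, w j / W * F α j = (∑ j, F α j * w j) / W := by
      rw [Finset.sum_div]; congr 1; ext j; ring
    rw [h2, le_div_iff₀ hWpos]
    linarith


open Module.End

private lemma normal_eigenbasis {n : ℕ}
    (T : EuclideanSpace ℂ (Fin n) →ₗ[ℂ] EuclideanSpace ℂ (Fin n))
    (hT : LinearMap.adjoint T * T = T * LinearMap.adjoint T) :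
    ∃ (b : OrthonormalBasis (Fin n) ℂ (EuclideanSpace ℂ (Fin n))) (μ : Fin n → ℂ),
      ∀ j, T (b j) = μ j • b j := by
  set Td := LinearMap.adjoint T with hTd
  set B : EuclideanSpace ℂ (Fin n) →ₗ[ℂ] EuclideanSpace ℂ (Fin n) := (2⁻¹ : ℂ) • (T + Td) with hB
  set C : EuclideanSpace ℂ (Fin n) →ₗ[ℂ] EuclideanSpace ℂ (Fin n) :=
    ((2 * Complex.I)⁻¹ : ℂ) • (T - Td) with hC
  have hBsa : IsSelfAdjoint B := by
    rw [IsSelfAdjoint, hB, star_smul, star_add, LinearMap.star_eq_adjoint,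
      LinearMap.star_eq_adjoint, LinearMap.adjoint_adjoint, ← hTd]
    rw [add_comm Td T]
    congr 1
    simp [RCLike.star_def, map_inv₀]
  have hCsa : IsSelfAdjoint C := by
    rw [IsSelfAdjoint, hC, star_smul, star_sub, LinearMap.star_eq_adjoint,
      LinearMap.star_eq_adjoint, LinearMap.adjoint_adjoint, ← hTd]
    have h1 : (starRingEnd ℂ) (2 * Complex.I)⁻¹ = -(2 * Complex.I)⁻¹ := by
      rw [map_inv₀, map_mul, Complex.conj_I, map_ofNat, mul_neg, inv_neg]
    rw [starRingEnd_apply] at h1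
    rw [h1, neg_smul, ← smul_neg, neg_sub]
  have hBsym : B.IsSymmetric := (LinearMap.isSymmetric_iff_isSelfAdjoint B).mpr hBsa
  have hCsym : C.IsSymmetric := (LinearMap.isSymmetric_iff_isSelfAdjoint C).mpr hCsa
  have hcomm : Commute B C := by
    rw [Commute, SemiconjBy, hB, hC]
    rw [smul_mul_assoc, mul_smul_comm, smul_mul_assoc, mul_smul_comm,
      smul_smul, smul_smul, mul_comm ((2:ℂ)*Complex.I)⁻¹ (2⁻¹:ℂ)]
    congr 1
    simp only [mul_sub, sub_mul, add_mul, mul_add]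
    rw [hT]
    abel
  have hTBC : T = B + Complex.I • C := by
    have h2 : Complex.I * (2 * Complex.I)⁻¹ = (2⁻¹ : ℂ) := by
      rw [mul_inv, ← mul_assoc, mul_comm Complex.I, mul_assoc,
        mul_inv_cancel₀ Complex.I_ne_zero, mul_one]
    have h3 : (T + Td) + (T - Td) = (2:ℂ) • T := by
      rw [two_smul]; abel
    rw [hB, hC, smul_smul, h2, ← smul_add, h3, smul_smul]
    norm_num
  classical
  have hn : Module.finrank ℂ (EuclideanSpace ℂ (Fin n)) = n := finrank_euclideanSpace_fin
  have internal0 := LinearMap.IsSymmetric.directSum_isInternal_of_commute hBsym hCsym hcomm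
  have hfam0 := LinearMap.IsSymmetric.orthogonalFamily_eigenspace_inf_eigenspace hBsym hCsym
  set V : ℂ × ℂ → Submodule ℂ (EuclideanSpace ℂ (Fin n)) :=
    fun i => eigenspace B i.2 ⊓ eigenspace C i.1 with hV
  have internal : DirectSum.IsInternal (fun i : {i : ℂ × ℂ // V i ≠ ⊥} => V i) :=
    DirectSum.isInternal_ne_bot_iff.mpr internal0
  haveI : Finite {i : ℂ × ℂ // V i ≠ ⊥} := by
    refine WellFoundedGT.finite_of_iSupIndep
      (internal0.submodule_iSupIndep.comp Subtype.val_injective) (fun i => i.2)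
  haveI : Fintype {i : ℂ × ℂ // V i ≠ ⊥} := Fintype.ofFinite _
  have hfam := hfam0.comp
    (Subtype.val_injective : Function.Injective (Subtype.val : {i : ℂ × ℂ // V i ≠ ⊥} → ℂ × ℂ))
  set b := internal.subordinateOrthonormalBasis hn hfam with hb
  refine ⟨b, fun j => ((internal.subordinateOrthonormalBasisIndex hn j hfam).1).2
      + Complex.I * ((internal.subordinateOrthonormalBasisIndex hn j hfam).1).1, fun j => ?_⟩
  have hmem := internal.subordinateOrthonormalBasis_subordinate hn j hfam
  set idx := (internal.subordinateOrthonormalBasisIndex hn j hfam).1 with hidx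
  obtain ⟨hmB, hmC⟩ := hmem
  rw [SetLike.mem_coe, mem_eigenspace_iff] at hmB
  rw [SetLike.mem_coe, mem_eigenspace_iff] at hmC
  show T (b j) = (idx.2 + Complex.I * idx.1) • b j
  rw [hTBC]
  simp only [LinearMap.add_apply, LinearMap.smul_apply]
  rw [← hb] at hmB hmC
  rw [hmB, hmC, smul_smul, add_smul]


private noncomputable def qp (k : ℕ) (α : Fin k → ℂ) : ℂ[X] :=
  X ^ k - ∑ i : Fin k, C (α i) * X ^ (i : ℕ)

private lemma qp_sum_degree_lt (k : ℕ) (α : Fin k → ℂ) :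
    (∑ i : Fin k, C (α i) * X ^ (i : ℕ) : ℂ[X]).degree < (k : ℕ) := by
  apply lt_of_le_of_lt (degree_sum_le _ _)
  rw [Finset.sup_lt_iff (by exact_mod_cast WithBot.bot_lt_coe k)]
  intro i _
  apply lt_of_le_of_lt (degree_C_mul_X_pow_le _ _)
  exact_mod_cast i.2

private lemma qp_monic (k : ℕ) (α : Fin k → ℂ) : (qp k α).Monic :=
  monic_X_pow_sub (qp_sum_degree_lt k α)

private lemma qp_natDegree (k : ℕ) (α : Fin k → ℂ) : (qp k α).natDegree = k := by
  have h : (qp k α).degree = (k : ℕ) := by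
    rw [qp, degree_sub_eq_left_of_degree_lt (by rw [degree_X_pow]; exact qp_sum_degree_lt k α),
      degree_X_pow]
  exact natDegree_eq_of_degree_eq_some h

private lemma qp_eval (k : ℕ) (α : Fin k → ℂ) (z : ℂ) :
    (qp k α).eval z = z ^ k - ∑ i : Fin k, α i * z ^ (i : ℕ) := by
  simp [qp, eval_finset_sum]

private lemma qp_surj (k : ℕ) (p : ℂ[X]) (hm : p.Monic) (hd : p.natDegree = k) :
    qp k (fun i => -(p.coeff i)) = p := by
  conv_rhs => rw [hm.as_sum, hd]
  rw [qp]
  rw [← Fin.sum_univ_eq_sum_range (fun i => C (p.coeff i) * X ^ i) k]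
  simp only [map_neg, neg_mul]
  rw [Finset.sum_neg_distrib, sub_neg_eq_add]

private lemma qp_aeval {S : Type*} [Ring S] [Algebra ℂ S] (k : ℕ) (α : Fin k → ℂ) (T : S) :
    Polynomial.aeval T (qp k α) = T ^ k - ∑ i : Fin k, α i • T ^ (i : ℕ) := by
  rw [qp, map_sub, map_pow, map_sum]
  congr 1
  · simp
  · refine Finset.sum_congr rfl fun i _ => ?_
    rw [map_mul, map_pow, aeval_C, aeval_X, Algebra.smul_def]

open Matrix Polynomial

/-- The Chebyshev matrix approximation instance of the max-min/min-max equality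
for a normal complex matrix: `f(z) = z^k`, `φᵢ(z) = z^{i-1}`. -/
theorem maxmin_eq_minmax_chebyshev_normal_complex
    (n k : ℕ) (A : Matrix (Fin n) (Fin n) ℂ) (hA : Aᴴ * A = A * Aᴴ) :
    (⨆ v : {v : EuclideanSpace ℂ (Fin n) // ‖v‖ = 1},
      ⨅ α : Fin k → ℂ,
        ‖Matrix.toEuclideanCLM (𝕜 := ℂ) (A ^ k) v.1
          - ∑ i : Fin k, α i • Matrix.toEuclideanCLM (𝕜 := ℂ) (A ^ (i : ℕ)) v.1‖)
    = ⨅ p : {p : Polynomial ℂ // p.Monic ∧ p.natDegree = k},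
        ‖Matrix.toEuclideanCLM (𝕜 := ℂ) (aeval A p.1)‖ := by
  haveI : Nonempty {p : Polynomial ℂ // p.Monic ∧ p.natDegree = k} :=
    ⟨⟨X ^ k, monic_X_pow k, natDegree_X_pow k⟩⟩
  rcases Nat.eq_zero_or_pos n with hn0 | hnpos
  · subst hn0
    haveI : IsEmpty {v : EuclideanSpace ℂ (Fin 0) // ‖v‖ = 1} := by
      refine ⟨fun v => ?_⟩
      have h1 : v.1 = 0 := Subsingleton.elim _ _
      have := v.2
      rw [h1, norm_zero] at this
      exact absurd this (by norm_num)
    rw [Real.iSup_of_isEmpty]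
    have hz : ∀ p : {p : Polynomial ℂ // p.Monic ∧ p.natDegree = k},
        ‖Matrix.toEuclideanCLM (𝕜 := ℂ) (aeval A p.1)‖ = 0 := by
      intro p
      have : Matrix.toEuclideanCLM (𝕜 := ℂ) (aeval A p.1) = 0 := by
        apply ContinuousLinearMap.ext
        intro x
        exact Subsingleton.elim _ _
      rw [this, norm_zero]
    rw [iInf_congr hz, ciInf_const]
  haveI : NeZero n := ⟨Nat.pos_iff_ne_zero.mp hnpos⟩
  haveI : Nonempty (Fin n) := Fin.pos_iff_nonempty.mp hnpos
  set T := Matrix.toEuclideanCLM (𝕜 := ℂ) A with hT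
  set E := EuclideanSpace ℂ (Fin n)
  -- normality of T
  have hstar : star T * T = T * star T := by
    have h1 : star T = Matrix.toEuclideanCLM (𝕜 := ℂ) Aᴴ := by
      rw [← map_star]
      congr 1
    rw [h1, hT, ← _root_.map_mul, ← _root_.map_mul, hA]
  -- eigenbasis
  obtain ⟨b, μ, hb⟩ : ∃ (b : OrthonormalBasis (Fin n) ℂ (EuclideanSpace ℂ (Fin n)))
      (μ : Fin n → ℂ), ∀ j, T (b j) = μ j • b j := by
    have hcoe : LinearMap.toContinuousLinearMap ((T : E →ₗ[ℂ] E)) = T :=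
      ContinuousLinearMap.coe_injective (LinearMap.coe_toContinuousLinearMap _)
    have hadj : LinearMap.adjoint (T : E →ₗ[ℂ] E) = ((star T : E →L[ℂ] E) : E →ₗ[ℂ] E) := by
      rw [ContinuousLinearMap.star_eq_adjoint, LinearMap.adjoint_eq_toCLM_adjoint, hcoe]
    obtain ⟨b, μ, hb⟩ := normal_eigenbasis (T : E →ₗ[ℂ] E) (by
      rw [hadj]
      apply LinearMap.ext
      intro x
      have hx := DFunLike.congr_fun hstar x
      simpa [ContinuousLinearMap.mul_apply, Module.End.mul_apply] using hx)
    exact ⟨b, μ, fun j => hb j⟩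
  -- powers on the eigenbasis
  have hTm : ∀ (i : ℕ) (j : Fin n), (T ^ i) (b j) = (μ j ^ i) • b j := by
    intro i
    induction i with
    | zero => intro j; simp
    | succ i ih =>
      intro j
      rw [pow_succ, ContinuousLinearMap.mul_apply, hb j, _root_.map_smul, ih j, smul_smul, pow_succ]
      ring_nf
  -- aeval on the eigenbasis
  have haev : ∀ (p : ℂ[X]) (j : Fin n), (aeval T p) (b j) = p.eval (μ j) • b j := by
    intro p
    induction p using Polynomial.induction_on' with
    | add p q hp hq =>
      intro j
      rw [_root_.map_add, eval_add, ContinuousLinearMap.add_apply, hp j, hq j, add_smul]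
    | monomial m a =>
      intro j
      rw [aeval_monomial, eval_monomial, ContinuousLinearMap.mul_apply, hTm m j]
      simp only [Algebra.algebraMap_eq_smul_one, ContinuousLinearMap.smul_apply,
        ContinuousLinearMap.one_apply, _root_.map_smul]
      rw [smul_smul, mul_comm]
  -- coordinates of aeval applied to a vector
  have hrepr : ∀ (p : ℂ[X]) (x : EuclideanSpace ℂ (Fin n)) (j : Fin n),
      b.repr ((aeval T p) x) j = p.eval (μ j) * b.repr x j := by
    intro p x j
    have key : (aeval T p) x = ∑ i, (p.eval (μ i) * b.repr x i) • b i := by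
      conv_lhs => rw [← b.sum_repr x, _root_.map_sum]
      refine Finset.sum_congr rfl fun i _ => ?_
      rw [_root_.map_smul, haev p i, smul_smul, mul_comm]
    rw [key, b.repr_apply_apply, inner_sum]
    simp only [inner_smul_right, orthonormal_iff_ite.mp b.orthonormal, mul_ite, mul_one, mul_zero]
    rw [Finset.sum_ite_eq]
    simp [b.repr_apply_apply]
  -- norm squared via coordinates
  have hnormsq : ∀ x : EuclideanSpace ℂ (Fin n), ‖x‖ ^ 2 = ∑ j, ‖b.repr x j‖ ^ 2 := by
    intro x
    rw [← b.repr.norm_map x, EuclideanSpace.norm_eq, Real.sq_sqrt]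
    exact Finset.sum_nonneg fun j _ => sq_nonneg _
  have hnormaev : ∀ (p : ℂ[X]) (x : EuclideanSpace ℂ (Fin n)),
      ‖(aeval T p) x‖ ^ 2 = ∑ j, ‖p.eval (μ j)‖ ^ 2 * ‖b.repr x j‖ ^ 2 := by
    intro p x
    rw [hnormsq]
    exact Finset.sum_congr rfl fun j _ => by rw [hrepr, norm_mul, mul_pow]
  -- operator norm via eigenvalues
  have hopnorm : ∀ p : ℂ[X], ‖aeval T p‖ = ⨆ j, ‖p.eval (μ j)‖ := by
    intro p
    have hble : ∀ j, ‖p.eval (μ j)‖ ≤ ⨆ j, ‖p.eval (μ j)‖ := fun j =>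
      le_ciSup (f := fun j => ‖p.eval (μ j)‖) (Set.Finite.bddAbove (Set.finite_range _)) j
    have hM0 : 0 ≤ ⨆ j, ‖p.eval (μ j)‖ :=
      le_trans (norm_nonneg _) (hble (Classical.arbitrary _))
    apply le_antisymm
    · apply ContinuousLinearMap.opNorm_le_bound _ hM0
      intro x
      have h1 : ‖(aeval T p) x‖ ^ 2 ≤ ((⨆ j, ‖p.eval (μ j)‖) * ‖x‖) ^ 2 := by
        rw [hnormaev, mul_pow]
        calc ∑ j, ‖p.eval (μ j)‖ ^ 2 * ‖b.repr x j‖ ^ 2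
            ≤ ∑ j, (⨆ j, ‖p.eval (μ j)‖) ^ 2 * ‖b.repr x j‖ ^ 2 :=
              Finset.sum_le_sum fun j _ => by
                have h2 := hble j
                have h3 : (0:ℝ) ≤ ‖p.eval (μ j)‖ := norm_nonneg _
                have h4 : ‖p.eval (μ j)‖ ^ 2 ≤ (⨆ j, ‖p.eval (μ j)‖) ^ 2 := by nlinarith
                exact mul_le_mul_of_nonneg_right h4 (sq_nonneg _)
          _ = (⨆ j, ‖p.eval (μ j)‖) ^ 2 * ∑ j, ‖b.repr x j‖ ^ 2 := by rw [Finset.mul_sum]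
          _ = (⨆ j, ‖p.eval (μ j)‖) ^ 2 * ‖x‖ ^ 2 := by rw [hnormsq]
      calc ‖(aeval T p) x‖ = Real.sqrt (‖(aeval T p) x‖ ^ 2) :=
            (Real.sqrt_sq (norm_nonneg _)).symm
        _ ≤ Real.sqrt (((⨆ j, ‖p.eval (μ j)‖) * ‖x‖) ^ 2) := Real.sqrt_le_sqrt h1
        _ = (⨆ j, ‖p.eval (μ j)‖) * ‖x‖ := Real.sqrt_sq (by positivity)
    · apply ciSup_le
      intro j
      have h2 : ‖p.eval (μ j)‖ = ‖(aeval T p) (b j)‖ := by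
        rw [haev, norm_smul, b.orthonormal.1 j, mul_one]
      rw [h2]
      calc ‖(aeval T p) (b j)‖ ≤ ‖aeval T p‖ * ‖b j‖ := (aeval T p).le_opNorm (b j)
        _ = ‖aeval T p‖ := by rw [b.orthonormal.1 j, mul_one]
  -- finite sup facts
  have hsupmax : ∀ f : Fin n → ℝ, ∃ j0, (⨆ j, f j) = f j0 ∧ ∀ j, f j ≤ f j0 := by
    intro f
    obtain ⟨j0, hj0⟩ := Finite.exists_max f
    exact ⟨j0, le_antisymm (ciSup_le hj0)
      (le_ciSup (Set.Finite.bddAbove (Set.finite_range f)) j0), hj0⟩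
  have hsqrt_sup : ∀ f : Fin n → ℝ, (⨆ j, Real.sqrt (f j)) = Real.sqrt (⨆ j, f j) := by
    intro f
    obtain ⟨j0, hj0, hmax⟩ := hsupmax f
    obtain ⟨j1, hj1, hmax1⟩ := hsupmax (fun j => Real.sqrt (f j))
    rw [hj0, hj1]
    exact le_antisymm (Real.sqrt_le_sqrt (hmax j1)) (hmax1 j0)
  -- the key objective function
  set F : (Fin k → ℂ) → Fin n → ℝ := fun α j => ‖(qp k α).eval (μ j)‖ ^ 2 with hF
  have hFnn : ∀ α j, 0 ≤ F α j := fun α j => sq_nonneg _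
  have hFconv : ∀ j, ConvexOn ℝ Set.univ (fun α => F α j) := by
    intro j
    refine ⟨convex_univ, ?_⟩
    intro α _ β _ a c ha hc hac
    have hac' : (a:ℂ) + (c:ℂ) = 1 := by exact_mod_cast congrArg (Complex.ofReal) hac
    have haffine : (qp k (a • α + c • β)).eval (μ j)
        = (a:ℂ) * (qp k α).eval (μ j) + (c:ℂ) * (qp k β).eval (μ j) := by
      rw [qp_eval, qp_eval, qp_eval]
      have hsum : ∑ i : Fin k, ((a • α + c • β) i) * (μ j) ^ (i:ℕ)
          = (a:ℂ) * ∑ i : Fin k, α i * μ j ^ (i:ℕ)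
            + (c:ℂ) * ∑ i : Fin k, β i * μ j ^ (i:ℕ) := by
        rw [Finset.mul_sum, Finset.mul_sum, ← Finset.sum_add_distrib]
        refine Finset.sum_congr rfl fun i _ => ?_
        simp only [Pi.add_apply, Pi.smul_apply, Complex.real_smul]
        ring
      rw [hsum]
      linear_combination (-(μ j ^ k)) * hac'
    simp only [hF, smul_eq_mul]
    rw [haffine]
    have h1 : ‖(a:ℂ) * (qp k α).eval (μ j) + (c:ℂ) * (qp k β).eval (μ j)‖
        ≤ a * ‖(qp k α).eval (μ j)‖ + c * ‖(qp k β).eval (μ j)‖ := by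
      calc ‖(a:ℂ) * (qp k α).eval (μ j) + (c:ℂ) * (qp k β).eval (μ j)‖
          ≤ ‖(a:ℂ) * (qp k α).eval (μ j)‖ + ‖(c:ℂ) * (qp k β).eval (μ j)‖ := norm_add_le _ _
        _ = a * ‖(qp k α).eval (μ j)‖ + c * ‖(qp k β).eval (μ j)‖ := by
            rw [norm_mul, norm_mul, Complex.norm_real, Complex.norm_real,
              Real.norm_of_nonneg ha, Real.norm_of_nonneg hc]
    have h2 : ‖(a:ℂ) * (qp k α).eval (μ j) + (c:ℂ) * (qp k β).eval (μ j)‖ ^ 2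
        ≤ (a * ‖(qp k α).eval (μ j)‖ + c * ‖(qp k β).eval (μ j)‖) ^ 2 := by
      nlinarith [norm_nonneg ((a:ℂ) * (qp k α).eval (μ j) + (c:ℂ) * (qp k β).eval (μ j)),
        norm_nonneg ((qp k α).eval (μ j)), norm_nonneg ((qp k β).eval (μ j))]
    have h3 : (a * ‖(qp k α).eval (μ j)‖ + c * ‖(qp k β).eval (μ j)‖) ^ 2
        ≤ a * ‖(qp k α).eval (μ j)‖ ^ 2 + c * ‖(qp k β).eval (μ j)‖ ^ 2 := by
      nlinarith [mul_nonneg (mul_nonneg ha hc)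
        (sq_nonneg (‖(qp k α).eval (μ j)‖ - ‖(qp k β).eval (μ j)‖))]
    linarith
  set Einf : ℝ := ⨅ α : Fin k → ℂ, ⨆ j, F α j with hEinf
  have hSnn : ∀ α, 0 ≤ ⨆ j, F α j := fun α =>
    le_ciSup_of_le (Set.Finite.bddAbove (Set.finite_range _)) (Classical.arbitrary _) (hFnn α _)
  -- expression rewriting
  have hPT : ∀ p : ℂ[X], Matrix.toEuclideanCLM (𝕜 := ℂ) (aeval A p) = aeval T p :=
    fun p => (aeval_algHom_apply _ A p).symm
  have hexpr : ∀ (α : Fin k → ℂ) (x : EuclideanSpace ℂ (Fin n)),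
      Matrix.toEuclideanCLM (𝕜 := ℂ) (A ^ k) x
        - ∑ i : Fin k, α i • Matrix.toEuclideanCLM (𝕜 := ℂ) (A ^ (i:ℕ)) x
      = (aeval T (qp k α)) x := by
    intro α x
    rw [qp_aeval]
    simp only [ContinuousLinearMap.sub_apply, ContinuousLinearMap.coe_sum',
      Finset.sum_apply, ContinuousLinearMap.smul_apply, map_pow]
    rfl
  -- RHS = sqrt Einf
  have hRHS : (⨅ p : {p : Polynomial ℂ // p.Monic ∧ p.natDegree = k},
      ‖Matrix.toEuclideanCLM (𝕜 := ℂ) (aeval A p.1)‖) = Real.sqrt Einf := by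
    have hsurj : Function.Surjective (fun α : Fin k → ℂ =>
        (⟨qp k α, qp_monic k α, qp_natDegree k α⟩ :
          {p : Polynomial ℂ // p.Monic ∧ p.natDegree = k})) := by
      rintro ⟨p, hm, hd⟩
      exact ⟨fun i => -(p.coeff i), Subtype.ext (qp_surj k p hm hd)⟩
    rw [← hsurj.iInf_comp (fun p => ‖Matrix.toEuclideanCLM (𝕜 := ℂ) (aeval A p.1)‖)]
    have h1 : ∀ α : Fin k → ℂ, ‖Matrix.toEuclideanCLM (𝕜 := ℂ) (aeval A (qp k α))‖
        = Real.sqrt (⨆ j, F α j) := by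
      intro α
      rw [hPT, hopnorm, ← hsqrt_sup]
      exact iSup_congr fun j => by rw [hF, Real.sqrt_sq (norm_nonneg _)]
    rw [iInf_congr h1, hEinf]
    exact (Monotone.map_ciInf_of_continuousAt
      (Real.continuous_sqrt.continuousAt)
      (fun x y h => Real.sqrt_le_sqrt h)
      ⟨0, by rintro _ ⟨α, rfl⟩; exact hSnn α⟩).symm
  -- easy direction: LHS ≤ RHS
  have hle : (⨆ v : {v : EuclideanSpace ℂ (Fin n) // ‖v‖ = 1},
      ⨅ α : Fin k → ℂ,
        ‖Matrix.toEuclideanCLM (𝕜 := ℂ) (A ^ k) v.1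
          - ∑ i : Fin k, α i • Matrix.toEuclideanCLM (𝕜 := ℂ) (A ^ (i : ℕ)) v.1‖)
      ≤ ⨅ p : {p : Polynomial ℂ // p.Monic ∧ p.natDegree = k},
        ‖Matrix.toEuclideanCLM (𝕜 := ℂ) (aeval A p.1)‖ := by
    haveI : Nonempty {v : EuclideanSpace ℂ (Fin n) // ‖v‖ = 1} :=
      ⟨⟨b (Classical.arbitrary _), b.orthonormal.1 _⟩⟩
    apply ciSup_le
    intro v
    apply le_ciInf
    intro p
    have hqeq : qp k (fun i => -(p.1.coeff i)) = p.1 := qp_surj k p.1 p.2.1 p.2.2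
    refine ciInf_le_of_le ⟨0, by rintro _ ⟨α, rfl⟩; exact norm_nonneg _⟩
      (fun i => -(p.1.coeff i)) ?_
    rw [hexpr, hqeq, hPT]
    calc ‖(aeval T p.1) v.1‖ ≤ ‖aeval T p.1‖ * ‖v.1‖ := (aeval T p.1).le_opNorm v.1
      _ = ‖aeval T p.1‖ := by rw [v.2, mul_one]
  -- hard direction: sqrt Einf ≤ LHS
  obtain ⟨w, hwnn, hwsum, hwE⟩ := sep_weights F hFconv hFnn
  set v : EuclideanSpace ℂ (Fin n) := ∑ j, ((Real.sqrt (w j) : ℝ) : ℂ) • b j with hv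
  have hreprv : ∀ i, b.repr v i = ((Real.sqrt (w i) : ℝ) : ℂ) := by
    intro i
    rw [hv, b.repr_apply_apply, inner_sum]
    simp only [inner_smul_right, orthonormal_iff_ite.mp b.orthonormal, mul_ite, mul_one, mul_zero]
    rw [Finset.sum_ite_eq]
    simp
  have hcoordsq : ∀ j, ‖b.repr v j‖ ^ 2 = w j := by
    intro j
    rw [hreprv, Complex.norm_real, Real.norm_of_nonneg (Real.sqrt_nonneg _),
      Real.sq_sqrt (hwnn j)]
  have hvnorm : ‖v‖ = 1 := by
    have h1 : ‖v‖ ^ 2 = 1 := by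
      rw [hnormsq, Finset.sum_congr rfl fun j _ => hcoordsq j, hwsum]
    calc ‖v‖ = Real.sqrt (‖v‖ ^ 2) := (Real.sqrt_sq (norm_nonneg _)).symm
      _ = 1 := by rw [h1, Real.sqrt_one]
  have hlow : ∀ α : Fin k → ℂ, Real.sqrt Einf ≤ ‖(aeval T (qp k α)) v‖ := by
    intro α
    have h1 : ‖(aeval T (qp k α)) v‖ ^ 2 = ∑ j, w j * F α j := by
      rw [hnormaev]
      exact Finset.sum_congr rfl fun j _ => by rw [hcoordsq, hF, mul_comm]
    calc Real.sqrt Einf ≤ Real.sqrt (∑ j, w j * F α j) := Real.sqrt_le_sqrt (hwE α)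
      _ = ‖(aeval T (qp k α)) v‖ := by rw [← h1, Real.sqrt_sq (norm_nonneg _)]
  have hbdd : BddAbove (Set.range (fun v : {v : EuclideanSpace ℂ (Fin n) // ‖v‖ = 1} =>
      ⨅ α : Fin k → ℂ,
        ‖Matrix.toEuclideanCLM (𝕜 := ℂ) (A ^ k) v.1
          - ∑ i : Fin k, α i • Matrix.toEuclideanCLM (𝕜 := ℂ) (A ^ (i : ℕ)) v.1‖)) := by
    refine ⟨‖Matrix.toEuclideanCLM (𝕜 := ℂ) (A ^ k)‖, ?_⟩
    rintro _ ⟨u, rfl⟩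
    refine ciInf_le_of_le ⟨0, by rintro _ ⟨α, rfl⟩; exact norm_nonneg _⟩ 0 ?_
    simp only [Pi.zero_apply, zero_smul, Finset.sum_const_zero, sub_zero]
    calc ‖Matrix.toEuclideanCLM (𝕜 := ℂ) (A ^ k) u.1‖
        ≤ ‖Matrix.toEuclideanCLM (𝕜 := ℂ) (A ^ k)‖ * ‖u.1‖ :=
          (Matrix.toEuclideanCLM (𝕜 := ℂ) (A ^ k)).le_opNorm u.1
      _ = ‖Matrix.toEuclideanCLM (𝕜 := ℂ) (A ^ k)‖ := by rw [u.2, mul_one]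
  have hge : Real.sqrt Einf ≤ (⨆ v : {v : EuclideanSpace ℂ (Fin n) // ‖v‖ = 1},
      ⨅ α : Fin k → ℂ,
        ‖Matrix.toEuclideanCLM (𝕜 := ℂ) (A ^ k) v.1
          - ∑ i : Fin k, α i • Matrix.toEuclideanCLM (𝕜 := ℂ) (A ^ (i : ℕ)) v.1‖) := by
    refine le_trans ?_ (le_ciSup hbdd ⟨v, hvnorm⟩)
    apply le_ciInf
    intro α
    rw [hexpr]
    exact hlow α
  exact le_antisymm hle (hRHS ▸ hge)
end
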